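/- arXiv:2003.03451 — 11 statements merged into one kernel-verified Lean document; each statement's English description precedes it below -/
import Mathlib

section
/- Let (X, d, ≪, ≤, τ) be a Lorentzian length space and let x ∈ X. Then there exist sequences (p_n) and (q_n) in X converging to x (in the metric d) such that p_n ≪ x ≪ q_n for all n, p_n ≪ p_{n+1} for all n, and q_{n+1} ≪ q_n for all n. -/
open scoped NNReal ENNReal
open Set Filter Topology

/-- A Lorentzian pre-length space: a causal space `(X, ≪, ≤)` carried by a metric space `X`,
together with a time separation function `τ : X × X → [0, ∞]`. -/
structure LorentzianPreLengthSpace (X : Type*) [MetricSpace X] where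
  /-- The chronological relation `≪`. -/
  chron : X → X → Prop
  /-- The causal relation `≤`. -/
  causal : X → X → Prop
  chron_trans : ∀ {x y z : X}, chron x y → chron y z → chron x z
  causal_refl : ∀ x : X, causal x x
  causal_trans : ∀ {x y z : X}, causal x y → causal y z → causal x z
  chron_imp_causal : ∀ {x y : X}, chron x y → causal x y
  /-- The time separation function `τ`. -/
  tau : X → X → ℝ≥0∞
  tau_lsc : LowerSemicontinuous fun p : X × X => tau p.1 p.2
  tau_rev_triangle : ∀ {x y z : X}, causal x y → causal y z → tau x y + tau y z ≤ tau x z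
  tau_eq_zero : ∀ {x y : X}, ¬ causal x y → tau x y = 0
  tau_pos_iff : ∀ {x y : X}, 0 < tau x y ↔ chron x y

namespace LorentzianPreLengthSpace

variable {X : Type*} [MetricSpace X] (L : LorentzianPreLengthSpace X)

/-- Chronological future `I⁺(x)`. -/
def Iplus (x : X) : Set X := {y | L.chron x y}

/-- Chronological past `I⁻(x)`. -/
def Iminus (x : X) : Set X := {y | L.chron y x}

/-- Causal future `J⁺(x)`. -/
def Jplus (x : X) : Set X := {y | L.causal x y}

/-- Causal past `J⁻(x)`. -/
def Jminus (x : X) : Set X := {y | L.causal y x}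

/-- A future directed causal curve on `[a,b]`: non-constant, Lipschitz, and order preserving
from the order of `[a,b]` to the causal relation. -/
def IsFutureCausalCurve (γ : ℝ → X) (a b : ℝ) : Prop :=
  a < b ∧ (∃ K : ℝ≥0, LipschitzOnWith K γ (Icc a b)) ∧
    (∃ s ∈ Icc a b, ∃ t ∈ Icc a b, γ s ≠ γ t) ∧
    ∀ ⦃s⦄, s ∈ Icc a b → ∀ ⦃t⦄, t ∈ Icc a b → s < t → L.causal (γ s) (γ t)

/-- A future directed timelike curve on `[a,b]`. -/
def IsFutureTimelikeCurve (γ : ℝ → X) (a b : ℝ) : Prop :=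
  a < b ∧ (∃ K : ℝ≥0, LipschitzOnWith K γ (Icc a b)) ∧
    (∃ s ∈ Icc a b, ∃ t ∈ Icc a b, γ s ≠ γ t) ∧
    ∀ ⦃s⦄, s ∈ Icc a b → ∀ ⦃t⦄, t ∈ Icc a b → s < t → L.chron (γ s) (γ t)

/-- The `τ`-length of a curve: the infimum over all partitions
`a = t₀ < t₁ < ⋯ < t_N = b` (with `N ≥ 1`) of `∑ τ(γ(tᵢ), γ(tᵢ₊₁))`. -/
noncomputable def tauLength (γ : ℝ → X) (a b : ℝ) : ℝ≥0∞ :=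
  ⨅ n : ℕ, ⨅ t : {t : Fin (n + 2) → ℝ // StrictMono t ∧ t 0 = a ∧ t (Fin.last (n + 1)) = b},
    ∑ i : Fin (n + 1), L.tau (γ (t.1 i.castSucc)) (γ (t.1 i.succ))

/-- Causal path connectedness: causally related (distinct) points are joined by a future
directed causal curve, chronologically related points by a future directed timelike curve. -/
def CausallyPathConnected : Prop :=
  (∀ x y : X, L.causal x y → x ≠ y →
      ∃ γ : ℝ → X, ∃ a b : ℝ, L.IsFutureCausalCurve γ a b ∧ γ a = x ∧ γ b = y) ∧
  (∀ x y : X, L.chron x y →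
      ∃ γ : ℝ → X, ∃ a b : ℝ, L.IsFutureTimelikeCurve γ a b ∧ γ a = x ∧ γ b = y)

/-- `p ≤_U q`: there is a future directed causal curve from `p` to `q` with image in `U`. -/
def CausalInside (U : Set X) (p q : X) : Prop :=
  ∃ γ : ℝ → X, ∃ a b : ℝ, L.IsFutureCausalCurve γ a b ∧ γ a = p ∧ γ b = q ∧ γ '' Icc a b ⊆ U

/-- `U` is causally closed: the relation `≤_U` is closed under limits inside `U`. -/
def CausallyClosedNbhd (U : Set X) : Prop :=
  ∀ (p q : X) (pn qn : ℕ → X), (∀ n, L.CausalInside U (pn n) (qn n)) →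
    Tendsto pn atTop (𝓝 p) → Tendsto qn atTop (𝓝 q) → p ∈ U → q ∈ U → L.CausalInside U p q

/-- Every point has a causally closed open neighborhood. -/
def LocallyCausallyClosed : Prop :=
  ∀ x : X, ∃ U : Set X, IsOpen U ∧ x ∈ U ∧ L.CausallyClosedNbhd U

/-- Localizability: every point has a localizing open neighborhood `Ω`. -/
def Localizable : Prop :=
  ∀ x : X, ∃ Ω : Set X, IsOpen Ω ∧ x ∈ Ω ∧
    (∃ C : ℝ≥0, ∀ (γ : ℝ → X) (a b : ℝ), L.IsFutureCausalCurve γ a b →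
        γ '' Icc a b ⊆ Ω → eVariationOn γ (Icc a b) ≤ C) ∧
    ∃ ω : X → X → ℝ≥0∞,
      ContinuousOn (fun pq : X × X => ω pq.1 pq.2) (Ω ×ˢ Ω) ∧
      (∀ p ∈ Ω, ∀ q ∈ Ω, ω p q ≠ ⊤) ∧
      (∀ p ∈ Ω, ∀ q ∈ Ω, ∀ r ∈ Ω, L.causal p q → L.causal q r → ω p q + ω q r ≤ ω p r) ∧
      (∀ p ∈ Ω, ∀ q ∈ Ω, ¬ L.causal p q → ω p q = 0) ∧
      (∀ p ∈ Ω, ∀ q ∈ Ω, (0 < ω p q ↔ L.chron p q)) ∧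
      (∀ y ∈ Ω, (L.Iplus y ∩ Ω).Nonempty ∧ (L.Iminus y ∩ Ω).Nonempty) ∧
      (∀ p ∈ Ω, ∀ q ∈ Ω, L.causal p q → p ≠ q →
        ∃ γ : ℝ → X, ∃ a b : ℝ, L.IsFutureCausalCurve γ a b ∧ γ a = p ∧ γ b = q ∧
          γ '' Icc a b ⊆ Ω ∧ L.tauLength γ a b = ω p q ∧
          ∀ (σ : ℝ → X) (c e : ℝ), L.IsFutureCausalCurve σ c e → σ c = p → σ e = q →
            σ '' Icc c e ⊆ Ω → L.tauLength σ c e ≤ L.tauLength γ a b)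

/-- `L` is a Lorentzian length space: causally path connected, locally causally closed,
localizable, and `τ` is the supremum of `τ`-lengths of connecting causal curves
(the supremum of the empty set being `0`). -/
def IsLengthSpace : Prop :=
  L.CausallyPathConnected ∧ L.LocallyCausallyClosed ∧ L.Localizable ∧
    ∀ x y : X, L.tau x y = sSup {ℓ : ℝ≥0∞ | ∃ γ : ℝ → X, ∃ a b : ℝ,
      L.IsFutureCausalCurve γ a b ∧ γ a = x ∧ γ b = y ∧ ℓ = L.tauLength γ a b}

/-- `K⁺`: the smallest closed and transitive relation containing `J⁺`. -/
def Kplus : Set (X × X) :=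
  ⋂₀ {R : Set (X × X) | IsClosed R ∧ (∀ a b c : X, (a, b) ∈ R → (b, c) ∈ R → (a, c) ∈ R) ∧
      {pq : X × X | L.causal pq.1 pq.2} ⊆ R}

/-- The Alexandrov topology, generated by the chronological diamonds. -/
def AlexandrovTopology : TopologicalSpace X :=
  TopologicalSpace.generateFrom {s : Set X | ∃ x y : X, s = L.Iplus x ∩ L.Iminus y}

/-- Strong causality: the Alexandrov topology coincides with the metric topology. -/
def StronglyCausal : Prop :=
  L.AlexandrovTopology = (inferInstance : TopologicalSpace X)

/-- Non-total imprisonment: causal curves in a compact set have uniformly bounded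
`d`-arclength. -/
def NonTotallyImprisoning : Prop :=
  ∀ K : Set X, IsCompact K → ∃ C : ℝ≥0, ∀ (γ : ℝ → X) (a b : ℝ),
    L.IsFutureCausalCurve γ a b → γ '' Icc a b ⊆ K → eVariationOn γ (Icc a b) ≤ C

/-- Global hyperbolicity. -/
def GloballyHyperbolic : Prop :=
  L.NonTotallyImprisoning ∧ ∀ x y : X, IsCompact (L.Jplus x ∩ L.Jminus y)

/-- Causality: the causal relation is antisymmetric. -/
def Causal : Prop := ∀ x y : X, L.causal x y → L.causal y x → x = y

/-- Causal simplicity. -/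
def CausallySimple : Prop :=
  L.Causal ∧ ∀ x : X, IsClosed (L.Jplus x) ∧ IsClosed (L.Jminus x)

/-- Distinguishing. -/
def Distinguishing : Prop :=
  (∀ x y : X, L.Iplus x = L.Iplus y → x = y) ∧ (∀ x y : X, L.Iminus x = L.Iminus y → x = y)

/-- Reflectivity. -/
def Reflective : Prop :=
  (∀ x y : X, L.Iplus x ⊆ L.Iplus y → L.Iminus y ⊆ L.Iminus x) ∧
  (∀ x y : X, L.Iminus y ⊆ L.Iminus x → L.Iplus x ⊆ L.Iplus y)

/-- Causal continuity. -/
def CausallyContinuous : Prop := L.Distinguishing ∧ L.Reflective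

/-- Stable causality: `K⁺` is antisymmetric. -/
def StablyCausal : Prop := ∀ x y : X, (x, y) ∈ L.Kplus → (y, x) ∈ L.Kplus → x = y

end LorentzianPreLengthSpace

/-- A distance homothetic map: `τ̃(f p, f q) = c · τ(p, q)` for some constant `c > 0`. -/
def DistanceHomothetic {X Y : Type*} [MetricSpace X] [MetricSpace Y]
    (LX : LorentzianPreLengthSpace X) (LY : LorentzianPreLengthSpace Y) (f : X → Y) : Prop :=
  ∃ c : ℝ≥0, 0 < c ∧ ∀ p q : X, LY.tau (f p) (f q) = (c : ℝ≥0∞) * LX.tau p q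

/-- A locally causally Lipschitz map. -/
def LocallyCausallyLipschitz {X Y : Type*} [MetricSpace X] [MetricSpace Y]
    (LX : LorentzianPreLengthSpace X) (f : X → Y) : Prop :=
  ∀ x : X, ∃ U : Set X, IsOpen U ∧ x ∈ U ∧ ∃ M : ℝ, 0 < M ∧
    ∀ x1 ∈ U, ∀ x2 ∈ U, LX.causal x1 x2 → dist (f x1) (f x2) ≤ M * dist x1 x2

section Helpers

open LorentzianPreLengthSpace

/-- Sampling times approaching `b` from below. -/
private lemma seq_aux_tendsto (a b : ℝ) :
    Tendsto (fun n : ℕ => (b - a) / ((n : ℝ) + 2)) atTop (𝓝 0) := by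
  apply Tendsto.div_atTop (tendsto_const_nhds)
  exact tendsto_atTop_add_const_right _ 2 tendsto_natCast_atTop_atTop

/-- From a future timelike curve ending at `γ b`, produce an increasing chronological sequence
converging to `γ b`. -/
private lemma exists_seq_of_timelike_end {X : Type*} [MetricSpace X]
    (L : LorentzianPreLengthSpace X) {γ : ℝ → X} {a b : ℝ}
    (h : L.IsFutureTimelikeCurve γ a b) :
    ∃ p : ℕ → X, Tendsto p atTop (𝓝 (γ b)) ∧ (∀ n, L.chron (p n) (γ b)) ∧
      ∀ n, L.chron (p n) (p (n + 1)) := by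
  obtain ⟨hab, ⟨K, hK⟩, -, hchron⟩ := h
  set t : ℕ → ℝ := fun n => b - (b - a) / ((n : ℝ) + 2) with ht
  have hba : (0 : ℝ) < b - a := sub_pos.mpr hab
  have htmem : ∀ n, t n ∈ Icc a b := by
    intro n
    constructor
    · have : (b - a) / ((n : ℝ) + 2) ≤ b - a := by
        apply div_le_self hba.le
        have : (0 : ℝ) ≤ (n : ℝ) := Nat.cast_nonneg n
        linarith
      simp only [ht]; linarith
    · have : (0 : ℝ) < (b - a) / ((n : ℝ) + 2) := by
        apply div_pos hba
        have : (0 : ℝ) ≤ (n : ℝ) := Nat.cast_nonneg n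
        linarith
      simp only [ht]; linarith
  have htlt : ∀ n, t n < b := by
    intro n
    have : (0 : ℝ) < (b - a) / ((n : ℝ) + 2) := by
      apply div_pos hba
      have : (0 : ℝ) ≤ (n : ℝ) := Nat.cast_nonneg n
      linarith
    simp only [ht]; linarith
  have htmono : ∀ n, t n < t (n + 1) := by
    intro n
    have h1 : (0 : ℝ) < (n : ℝ) + 2 := by positivity
    have h2 : ((n : ℝ) + 2) < ((n : ℝ) + 1) + 2 := by linarith
    have := div_lt_div_of_pos_left hba h1 h2
    simp only [ht, Nat.cast_add, Nat.cast_one]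
    linarith
  refine ⟨fun n => γ (t n), ?_, ?_, ?_⟩
  · have hcont : ContinuousWithinAt γ (Icc a b) b :=
      hK.continuousOn b (right_mem_Icc.mpr hab.le)
    have htt : Tendsto t atTop (𝓝 b) := by
      have := (seq_aux_tendsto a b).const_sub b
      simpa using this
    exact hcont.tendsto.comp
      (tendsto_nhdsWithin_of_tendsto_nhds_of_eventually_within _ htt
        (Eventually.of_forall htmem))
  · exact fun n => hchron (htmem n) (right_mem_Icc.mpr hab.le) (htlt n)
  · exact fun n => hchron (htmem n) (htmem (n + 1)) (htmono n)

/-- From a future timelike curve starting at `γ a`, produce a decreasing chronological sequence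
converging to `γ a`. -/
private lemma exists_seq_of_timelike_start {X : Type*} [MetricSpace X]
    (L : LorentzianPreLengthSpace X) {γ : ℝ → X} {a b : ℝ}
    (h : L.IsFutureTimelikeCurve γ a b) :
    ∃ q : ℕ → X, Tendsto q atTop (𝓝 (γ a)) ∧ (∀ n, L.chron (γ a) (q n)) ∧
      ∀ n, L.chron (q (n + 1)) (q n) := by
  obtain ⟨hab, ⟨K, hK⟩, -, hchron⟩ := h
  set t : ℕ → ℝ := fun n => a + (b - a) / ((n : ℝ) + 2) with ht
  have hba : (0 : ℝ) < b - a := sub_pos.mpr hab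
  have htmem : ∀ n, t n ∈ Icc a b := by
    intro n
    constructor
    · have : (0 : ℝ) < (b - a) / ((n : ℝ) + 2) := by
        apply div_pos hba
        have : (0 : ℝ) ≤ (n : ℝ) := Nat.cast_nonneg n
        linarith
      simp only [ht]; linarith
    · have : (b - a) / ((n : ℝ) + 2) ≤ b - a := by
        apply div_le_self hba.le
        have : (0 : ℝ) ≤ (n : ℝ) := Nat.cast_nonneg n
        linarith
      simp only [ht]; linarith
  have htgt : ∀ n, a < t n := by
    intro n
    have : (0 : ℝ) < (b - a) / ((n : ℝ) + 2) := by
      apply div_pos hba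
      have : (0 : ℝ) ≤ (n : ℝ) := Nat.cast_nonneg n
      linarith
    simp only [ht]; linarith
  have htmono : ∀ n, t (n + 1) < t n := by
    intro n
    have h1 : (0 : ℝ) < (n : ℝ) + 2 := by positivity
    have h2 : ((n : ℝ) + 2) < ((n : ℝ) + 1) + 2 := by linarith
    have := div_lt_div_of_pos_left hba h1 h2
    simp only [ht, Nat.cast_add, Nat.cast_one]
    linarith
  refine ⟨fun n => γ (t n), ?_, ?_, ?_⟩
  · have hcont : ContinuousWithinAt γ (Icc a b) a :=
      hK.continuousOn a (left_mem_Icc.mpr hab.le)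
    have htt : Tendsto t atTop (𝓝 a) := by
      have := (seq_aux_tendsto a b).const_add a
      simpa using this
    exact hcont.tendsto.comp
      (tendsto_nhdsWithin_of_tendsto_nhds_of_eventually_within _ htt
        (Eventually.of_forall htmem))
  · exact fun n => hchron (left_mem_Icc.mpr hab.le) (htmem n) (htgt n)
  · exact fun n => hchron (htmem (n + 1)) (htmem n) (htmono n)

end Helpers

/-- Sequence Lemma: in a Lorentzian length space every point `x` admits
sequences `pₙ → x`, `qₙ → x` with `pₙ ≪ x ≪ qₙ`, `pₙ ≪ pₙ₊₁` and `qₙ₊₁ ≪ qₙ`. -/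
theorem sequence_lemma {X : Type*} [MetricSpace X] (L : LorentzianPreLengthSpace X)
    (hL : L.IsLengthSpace) (x : X) :
    ∃ p q : ℕ → X,
      Tendsto p atTop (𝓝 x) ∧ Tendsto q atTop (𝓝 x) ∧
      (∀ n : ℕ, L.chron (p n) x) ∧ (∀ n : ℕ, L.chron x (q n)) ∧
      (∀ n : ℕ, L.chron (p n) (p (n + 1))) ∧ (∀ n : ℕ, L.chron (q (n + 1)) (q n)) := by
  obtain ⟨⟨-, hpath⟩, -, hloc, -⟩ := hL
  obtain ⟨Ω, -, hxΩ, -, ω, -, -, -, -, -, hIO, -⟩ := hloc x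
  obtain ⟨⟨z, hz, -⟩, ⟨y, hy, -⟩⟩ := hIO x hxΩ
  obtain ⟨γ, a, b, hγ, hγa, hγb⟩ := hpath y x hy
  obtain ⟨σ, c, e, hσ, hσc, -⟩ := hpath x z hz
  obtain ⟨p, hp, hpx, hpp⟩ := exists_seq_of_timelike_end L hγ
  obtain ⟨q, hq, hxq, hqq⟩ := exists_seq_of_timelike_start L hσ
  rw [hγb] at hp hpx
  rw [hσc] at hq hxq
  exact ⟨p, q, hp, hq, hpx, hxq, hpp, hqq⟩
end

section
/- Let (X, d, ≪, ≤, τ) be a Lorentzian length space. Then for every x ∈ X the closure (in the metric topology) of I⁺(x) equals {y ∈ X : I⁺(y) ⊆ I⁺(x)}. -/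
open scoped NNReal ENNReal
open Set Filter Topology

/-- in a Lorentzian length space,
`closure (I⁺(x)) = {y : I⁺(y) ⊆ I⁺(x)}`. -/
theorem closure_Iplus {X : Type*} [MetricSpace X] (L : LorentzianPreLengthSpace X)
    (hL : L.IsLengthSpace) (x : X) :
    closure (L.Iplus x) = {y : X | L.Iplus y ⊆ L.Iplus x} := by
  ext y
  simp only [Set.mem_setOf_eq]
  constructor
  · intro hy z hz
    have hopen : IsOpen {p : X × X | 0 < L.tau p.1 p.2} :=
      L.tau_lsc.isOpen_preimage 0
    have hIm : IsOpen (L.Iminus z) := by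
      have hset : L.Iminus z = (fun w => (w, z)) ⁻¹' {p : X × X | 0 < L.tau p.1 p.2} := by
        ext w
        simp only [LorentzianPreLengthSpace.Iminus, Set.mem_setOf_eq, Set.mem_preimage]
        exact (L.tau_pos_iff).symm
      rw [hset]
      exact hopen.preimage (continuous_id.prodMk continuous_const)
    obtain ⟨w, hwIm, hwS⟩ := mem_closure_iff.mp hy _ hIm hz
    exact L.chron_trans hwS hwIm
  · intro hsub
    obtain ⟨Ω, -, hyΩ, -, ω, -, -, -, -, -, hI, -⟩ := hL.2.2.1 y
    obtain ⟨⟨z, hz, -⟩, -⟩ := hI y hyΩ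
    obtain ⟨γ, a, b, ⟨hab, ⟨K, hK⟩, -, hchron⟩, hga, hgb⟩ := hL.1.2 y z hz
    rw [Metric.mem_closure_iff]
    intro ε hε
    have hK1 : (0 : ℝ) < (K : ℝ) + 1 := by positivity
    set m : ℝ := min (b - a) (ε / ((K : ℝ) + 1)) with hm
    have h1 : 0 < m := lt_min (by linarith) (div_pos hε hK1)
    set t : ℝ := a + m / 2 with ht
    have hta : a < t := by simp only [ht]; linarith
    have htb : t ≤ b := by
      have h2 : m ≤ b - a := min_le_left _ _
      simp only [ht]; linarith
    have htI : t ∈ Icc a b := ⟨le_of_lt hta, htb⟩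
    have haI : a ∈ Icc a b := ⟨le_refl _, le_of_lt hab⟩
    refine ⟨γ t, hsub ?_, ?_⟩
    · show L.chron y (γ t)
      rw [← hga]
      exact hchron haI htI hta
    · have hd : dist (γ a) (γ t) ≤ (K : ℝ) * dist a t := hK.dist_le_mul a haI t htI
      have hdat : dist a t = m / 2 := by
        rw [Real.dist_eq]
        simp only [ht]
        rw [abs_of_nonpos (by linarith)]
        ring
      have hme : m ≤ ε / ((K : ℝ) + 1) := min_le_right _ _
      have hKnn : (0 : ℝ) ≤ (K : ℝ) := K.coe_nonneg
      calc dist y (γ t) = dist (γ a) (γ t) := by rw [hga]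
        _ ≤ (K : ℝ) * dist a t := hd
        _ = (K : ℝ) * (m / 2) := by rw [hdat]
        _ < ε := by
            have : (K : ℝ) * (m / 2) ≤ (K : ℝ) * (ε / ((K : ℝ) + 1) / 2) := by
              apply mul_le_mul_of_nonneg_left _ hKnn
              linarith
            have h3 : (K : ℝ) * (ε / ((K : ℝ) + 1) / 2) < ε := by
              have h4 : (K : ℝ) * (ε / ((K : ℝ) + 1) / 2) =
                  ((K : ℝ) / (((K : ℝ) + 1) * 2)) * ε := by
                field_simp
              rw [h4]
              have h5 : (K : ℝ) / (((K : ℝ) + 1) * 2) < 1 := by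
                rw [div_lt_one (by positivity)]; nlinarith
              nlinarith
            linarith
end

section
/- Let (X, d, ≪, ≤, τ) be a Lorentzian length space. Then for every x ∈ X the closure (in the metric topology) of I⁻(x) equals {y ∈ X : I⁻(y) ⊆ I⁻(x)}. -/
open scoped NNReal ENNReal
open Set Filter Topology

/-- in a Lorentzian length space,
`closure (I⁻(x)) = {y : I⁻(y) ⊆ I⁻(x)}`. -/
theorem closure_Iminus {X : Type*} [MetricSpace X] (L : LorentzianPreLengthSpace X)
    (hL : L.IsLengthSpace) (x : X) :
    closure (L.Iminus x) = {y : X | L.Iminus y ⊆ L.Iminus x} := by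
  ext y
  simp only [Set.mem_setOf_eq]
  constructor
  · -- closure I⁻(x) ⊆ {y : I⁻(y) ⊆ I⁻(x)}
    intro hy z hz
    -- hz : L.chron z y ; I⁺(z) is open
    have hopen : IsOpen (L.Iplus z) := by
      rw [isOpen_iff_mem_nhds]
      intro w hw
      have h0 : 0 < L.tau z w := L.tau_pos_iff.mpr hw
      have hev : ∀ᶠ p in 𝓝 (z, w), 0 < L.tau p.1 p.2 := L.tau_lsc (z, w) 0 h0
      have hc : Tendsto (fun u : X => (z, u)) (𝓝 w) (𝓝 (z, w)) :=
        (continuous_const.prodMk continuous_id).tendsto w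
      filter_upwards [hc.eventually hev] with u hu
      exact L.tau_pos_iff.mp hu
    have hyIp : y ∈ L.Iplus z := hz
    obtain ⟨w, hw1, hw2⟩ := (_root_.mem_closure_iff.mp hy) (L.Iplus z) hopen hyIp
    exact L.chron_trans hw1 hw2
  · -- {y : I⁻(y) ⊆ I⁻(x)} ⊆ closure I⁻(x)
    intro hsub
    obtain ⟨Ω, hΩo, hyΩ, hC, ω, hc1, hc2, hc3, hc4, hc5, hne, hmax⟩ := hL.2.2.1 y
    obtain ⟨_, z, hz, hzΩ⟩ := hne y hyΩ
    -- hz : z ∈ L.Iminus y, i.e. L.chron z y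
    obtain ⟨γ, a, b, ⟨hab, ⟨K, hK⟩, _, hchron⟩, hga, hgb⟩ := hL.1.2 z y hz
    set u : ℕ → ℝ := fun n => b - (b - a) / (n + 1) with hu
    have hba : (0 : ℝ) < b - a := sub_pos.mpr hab
    have hu_mem : ∀ n : ℕ, u n ∈ Ico a b := by
      intro n
      have hn : (0 : ℝ) < (n : ℝ) + 1 := by positivity
      constructor
      · have h1 : (b - a) / ((n : ℝ) + 1) ≤ b - a := by
          rw [div_le_iff₀ hn]
          nlinarith
        simp only [hu]
        linarith
      · have h2 : (0 : ℝ) < (b - a) / ((n : ℝ) + 1) := by positivity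
        simp only [hu]
        linarith
    have hu_tend : Tendsto u atTop (𝓝 b) := by
      have h0 : Tendsto (fun n : ℕ => (b - a) / ((n : ℝ) + 1)) atTop (𝓝 0) := by
        have := tendsto_one_div_add_atTop_nhds_zero_nat (𝕜 := ℝ)
        have h := this.const_mul (b - a)
        simpa [div_eq_mul_inv, mul_comm, mul_assoc, one_div] using h
      have := Tendsto.const_sub b h0
      simpa [hu] using this
    have hu_within : Tendsto u atTop (𝓝[Icc a b] b) :=
      tendsto_nhdsWithin_of_tendsto_nhds_of_eventually_within _ hu_tend
        (Eventually.of_forall fun n => Ico_subset_Icc_self (hu_mem n))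
    have hcont : ContinuousWithinAt γ (Icc a b) b :=
      hK.continuousOn.continuousWithinAt (right_mem_Icc.mpr hab.le)
    have htend : Tendsto (fun n => γ (u n)) atTop (𝓝 y) := by
      rw [← hgb]
      exact hcont.tendsto.comp hu_within
    refine mem_closure_of_tendsto htend ?_
    filter_upwards with n
    have h1 : γ (u n) ∈ L.Iminus y := by
      have := hchron (Ico_subset_Icc_self (hu_mem n)) (right_mem_Icc.mpr hab.le) (hu_mem n).2
      rwa [hgb] at this
    exact hsub h1
end

section
/- Let (X, d, ≪, ≤, τ) be a Lorentzian length space. Then for every x ∈ X the metric closure of I⁺(x) equals the metric closure of J⁺(x), and the metric closure of I⁻(x) equals the metric closure of J⁻(x). -/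
open scoped NNReal ENNReal
open Set Filter Topology

/-- in a Lorentzian length space, `closure (I⁺(x)) = closure (J⁺(x))` and
`closure (I⁻(x)) = closure (J⁻(x))`. -/
theorem closure_I_eq_closure_J {X : Type*} [MetricSpace X] (L : LorentzianPreLengthSpace X)
    (hL : L.IsLengthSpace) (x : X) :
    closure (L.Iplus x) = closure (L.Jplus x) ∧
    closure (L.Iminus x) = closure (L.Jminus x) := by
  obtain ⟨⟨_, htpc⟩, _, hloc, _⟩ := hL
  -- push-up lemmas
  have pushup : ∀ {a b c : X}, L.causal a b → L.chron b c → L.chron a c := by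
    intro a b c hab hbc
    have h1 : 0 < L.tau b c := L.tau_pos_iff.mpr hbc
    have h2 := L.tau_rev_triangle hab (L.chron_imp_causal hbc)
    exact L.tau_pos_iff.mp (lt_of_lt_of_le h1 (le_trans le_add_self h2))
  have pushdown : ∀ {a b c : X}, L.chron a b → L.causal b c → L.chron a c := by
    intro a b c hab hbc
    have h1 : 0 < L.tau a b := L.tau_pos_iff.mpr hab
    have h2 := L.tau_rev_triangle (L.chron_imp_causal hab) hbc
    exact L.tau_pos_iff.mp (lt_of_lt_of_le h1 (le_trans le_self_add h2))
  constructor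
  · refine le_antisymm (closure_mono fun y hy => L.chron_imp_causal hy)
      (closure_minimal ?_ isClosed_closure)
    intro y hy
    -- pick z with y ≪ z, and a timelike curve from y to z
    obtain ⟨Ω, _, hyΩ, _, ω, _, _, _, _, _, hne, _⟩ := hloc y
    obtain ⟨z, hz, _⟩ := (hne y hyΩ).1
    obtain ⟨γ, a, b, ⟨hab, ⟨K, hK⟩, _, hmono⟩, hga, hgb⟩ := htpc y z hz
    have haIcc : a ∈ Icc a b := left_mem_Icc.mpr hab.le
    have hNeBot : (𝓝[Ioo a b] a).NeBot := by
      rw [← mem_closure_iff_nhdsWithin_neBot, closure_Ioo hab.ne]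
      exact haIcc
    have htend : Tendsto γ (𝓝[Ioo a b] a) (𝓝 y) := by
      have := (hK.continuousOn.continuousWithinAt haIcc).mono Ioo_subset_Icc_self
      rw [ContinuousWithinAt, hga] at this; exact this
    refine mem_closure_of_tendsto htend ?_
    filter_upwards [self_mem_nhdsWithin] with t ht
    have : L.chron (γ a) (γ t) := hmono haIcc (Ioo_subset_Icc_self ht) ht.1
    rw [hga] at this
    exact pushup hy this
  · refine le_antisymm (closure_mono fun y hy => L.chron_imp_causal hy)
      (closure_minimal ?_ isClosed_closure)
    intro y hy
    obtain ⟨Ω, _, hyΩ, _, ω, _, _, _, _, _, hne, _⟩ := hloc y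
    obtain ⟨w, hw, _⟩ := (hne y hyΩ).2
    obtain ⟨γ, a, b, ⟨hab, ⟨K, hK⟩, _, hmono⟩, hga, hgb⟩ := htpc w y hw
    have hbIcc : b ∈ Icc a b := right_mem_Icc.mpr hab.le
    have hNeBot : (𝓝[Ioo a b] b).NeBot := by
      rw [← mem_closure_iff_nhdsWithin_neBot, closure_Ioo hab.ne]
      exact hbIcc
    have htend : Tendsto γ (𝓝[Ioo a b] b) (𝓝 y) := by
      have := (hK.continuousOn.continuousWithinAt hbIcc).mono Ioo_subset_Icc_self
      rw [ContinuousWithinAt, hgb] at this; exact this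
    refine mem_closure_of_tendsto htend ?_
    filter_upwards [self_mem_nhdsWithin] with t ht
    have : L.chron (γ t) (γ b) := hmono (Ioo_subset_Icc_self ht) hbIcc ht.2
    rw [hgb] at this
    exact pushdown this hy
end

section
/- Every globally hyperbolic Lorentzian length space is causally simple; that is, if (X, d, ≪, ≤, τ) is a Lorentzian length space that is non-totally imprisoning and in which J⁺(x) ∩ J⁻(y) is compact for all x, y ∈ X, then ≤ is antisymmetric and the sets J⁺(x) and J⁻(x) are closed in the metric topology for every x ∈ X. -/
open scoped NNReal ENNReal
open Set Filter Topology

namespace GHCSaux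

/-- Distance to the set of even integers: a `1`-Lipschitz triangle wave. -/
noncomputable def tri (t : ℝ) : ℝ := Metric.infDist t (Set.range fun k : ℤ => (2 * k : ℝ))

lemma tri_lipschitz : LipschitzWith 1 tri := Metric.lipschitz_infDist_pt _

lemma tri_nonneg (t : ℝ) : 0 ≤ tri t := Metric.infDist_nonneg

lemma tri_le_one (t : ℝ) : tri t ≤ 1 := by
  have h1 : |t / 2 - round (t / 2)| ≤ 1 / 2 := abs_sub_round (t / 2)
  have h2 : dist t ((2 * (round (t / 2) : ℤ) : ℝ)) ≤ 1 := by
    rw [Real.dist_eq]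
    have : t - (2 * (round (t / 2) : ℤ) : ℝ) = 2 * (t / 2 - round (t / 2)) := by
      push_cast; ring
    rw [this, abs_mul, abs_two]
    linarith
  exact le_trans (Metric.infDist_le_dist_of_mem ⟨round (t / 2), rfl⟩) h2

lemma tri_even (k : ℤ) : tri (2 * k) = 0 := Metric.infDist_zero_of_mem ⟨k, rfl⟩

lemma tri_odd (k : ℤ) : tri (2 * k + 1) = 1 := by
  refine le_antisymm (tri_le_one _) ?_
  by_contra h
  push_neg at h
  unfold tri at h
  obtain ⟨p, ⟨j, rfl⟩, hp⟩ :=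
    (Metric.infDist_lt_iff (s := Set.range fun k : ℤ => (2 * k : ℝ))
      ⟨(2 * ((0 : ℤ) : ℝ)), ⟨0, by norm_num⟩⟩).mp h
  rw [Real.dist_eq] at hp
  have h0 : (2 * (k - j) + 1 : ℤ) ≠ 0 := by omega
  have h1 : (1 : ℤ) ≤ |2 * (k - j) + 1| := Int.one_le_abs h0
  have h2 : (1 : ℝ) ≤ |((2 * (k - j) + 1 : ℤ) : ℝ)| := by
    rw [← Int.cast_abs]; exact_mod_cast h1
  have h3 : (2 * (k : ℝ) + 1) - (2 * (j : ℝ)) = ((2 * (k - j) + 1 : ℤ) : ℝ) := by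
    push_cast; ring
  rw [h3] at hp
  linarith

end GHCSaux

open GHCSaux in
/-- every globally hyperbolic Lorentzian length space is causally simple. -/
theorem globallyHyperbolic_causallySimple {X : Type*} [MetricSpace X]
    (L : LorentzianPreLengthSpace X) (hL : L.IsLengthSpace)
    (hnti : L.NonTotallyImprisoning)
    (hcpt : ∀ x y : X, IsCompact (L.Jplus x ∩ L.Jminus y)) :
    (∀ x y : X, L.causal x y → L.causal y x → x = y) ∧
    ∀ x : X, IsClosed (L.Jplus x) ∧ IsClosed (L.Jminus x) := by
  -- openness of chronological pasts and futures, from lower semicontinuity of τ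
  have hIminus_open : ∀ z : X, IsOpen (L.Iminus z) := by
    intro z
    have hlsc : LowerSemicontinuous fun p : X => L.tau p z :=
      LowerSemicontinuous.comp L.tau_lsc (Continuous.prodMk continuous_id continuous_const)
    have : L.Iminus z = (fun p : X => L.tau p z) ⁻¹' Set.Ioi 0 := by
      ext p
      simp only [LorentzianPreLengthSpace.Iminus, Set.mem_setOf_eq, Set.mem_preimage,
        Set.mem_Ioi]
      exact (L.tau_pos_iff).symm
    rw [this]
    exact hlsc.isOpen_preimage 0
  have hIplus_open : ∀ z : X, IsOpen (L.Iplus z) := by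
    intro z
    have hlsc : LowerSemicontinuous fun p : X => L.tau z p :=
      LowerSemicontinuous.comp (g := fun p : X => (z, p)) L.tau_lsc (Continuous.prodMk continuous_const continuous_id)
    have : L.Iplus z = (fun p : X => L.tau z p) ⁻¹' Set.Ioi 0 := by
      ext p
      simp only [LorentzianPreLengthSpace.Iplus, Set.mem_setOf_eq, Set.mem_preimage,
        Set.mem_Ioi]
      exact (L.tau_pos_iff).symm
    rw [this]
    exact hlsc.isOpen_preimage 0
  constructor
  · -- antisymmetry of the causal relation
    intro x y hxy hyx
    by_contra hne
    obtain ⟨γ, a, b, hγ, hγa, hγb⟩ := hL.1.1 x y hxy hne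
    obtain ⟨hab, ⟨Kγ, hKγ⟩, -, hγc⟩ := hγ
    -- every point of γ lies in J⁺(x) ∩ J⁻(x)
    have himgJ : ∀ u ∈ Set.Icc a b, L.causal x (γ u) ∧ L.causal (γ u) x := by
      intro u hu
      constructor
      · rcases eq_or_lt_of_le hu.1 with h | h
        · rw [← h, hγa]; exact L.causal_refl x
        · rw [← hγa]
          exact hγc (Set.left_mem_Icc.mpr hab.le) hu h
      · rcases eq_or_lt_of_le hu.2 with h | h
        · rw [h, hγb]; exact hyx
        · refine L.causal_trans (hγc hu (Set.right_mem_Icc.mpr hab.le) h) ?_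
          rw [hγb]; exact hyx
    obtain ⟨C, hC⟩ := hnti _ (hcpt x x)
    -- the reparametrizing zig-zag
    set w : ℝ → ℝ := fun t => a + (b - a) * tri t with hw_def
    have hba : (0 : ℝ) ≤ b - a := sub_nonneg.mpr hab.le
    have hw_mem : ∀ t, w t ∈ Set.Icc a b := by
      intro t
      constructor
      · have := mul_nonneg hba (tri_nonneg t); simp only [hw_def]; linarith
      · have := mul_le_of_le_one_right hba (tri_le_one t)
        simp only [hw_def]; linarith
    have hwa : ∀ k : ℤ, w (2 * k) = a := by
      intro k; simp [hw_def, tri_even]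
    have hwb : ∀ k : ℤ, w (2 * k + 1) = b := by
      intro k; simp [hw_def, tri_odd]
    have hwL : LipschitzWith (Real.toNNReal (b - a)) w := by
      apply LipschitzWith.of_dist_le_mul
      intro s t
      have htr : dist (tri s) (tri t) ≤ dist s t := by
        simpa using tri_lipschitz.dist_le_mul s t
      have h1 : dist (w s) (w t) = (b - a) * dist (tri s) (tri t) := by
        simp only [hw_def, Real.dist_eq]
        rw [show a + (b - a) * tri s - (a + (b - a) * tri t)
            = (b - a) * (tri s - tri t) by ring, abs_mul, abs_of_nonneg hba]
      rw [h1, Real.coe_toNNReal _ hba]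
      exact mul_le_mul_of_nonneg_left htr hba
    set Γ : ℝ → X := fun t => γ (w t) with hΓ_def
    have hΓnat : ∀ j : ℕ, Γ (j : ℝ) = if Even j then x else y := by
      intro j
      rcases Nat.even_or_odd j with hje | hjo
      · obtain ⟨k, hk⟩ := hje
        have hcast : (j : ℝ) = 2 * ((k : ℤ) : ℝ) := by
          push_cast [hk]; ring
        rw [if_pos ⟨k, hk⟩]
        simp only [hΓ_def, hcast]
        rw [hwa, hγa]
      · obtain ⟨k, hk⟩ := hjo
        have hcast : (j : ℝ) = 2 * ((k : ℤ) : ℝ) + 1 := by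
          push_cast [hk]; ring
        rw [if_neg (by simpa [hk] using (Nat.odd_iff_not_even).mp ⟨k, hk⟩)]
        simp only [hΓ_def, hcast]
        rw [hwb, hγb]
    -- the key uniform bound
    have key : ∀ m : ℕ, (m : ℝ≥0∞) * edist y x ≤ C := by
      intro m
      rcases Nat.eq_zero_or_pos m with rfl | hm
      · simp
      have hm1 : (1 : ℝ) ≤ (m : ℝ) := by exact_mod_cast hm
      have h0m : (0 : ℝ) < (m : ℝ) := by linarith
      have hcurve : L.IsFutureCausalCurve Γ 0 (m : ℝ) := by
        refine ⟨h0m, ⟨Kγ * Real.toNNReal (b - a), ?_⟩, ?_, ?_⟩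
        · exact hKγ.comp (hwL.lipschitzOnWith) (fun t _ => hw_mem t)
        · refine ⟨0, ⟨le_refl _, h0m.le⟩, 1, ⟨zero_le_one, hm1⟩, ?_⟩
          have h0 : Γ (0 : ℝ) = x := by simpa using hΓnat 0
          have h1 : Γ (1 : ℝ) = y := by simpa using hΓnat 1
          rw [h0, h1]; exact hne
        · intro s _ t _ _
          exact L.causal_trans (himgJ (w s) (hw_mem s)).2 (himgJ (w t) (hw_mem t)).1
      have himg : Γ '' Set.Icc 0 (m : ℝ) ⊆ L.Jplus x ∩ L.Jminus x := by
        rintro p ⟨t, -, rfl⟩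
        exact ⟨(himgJ (w t) (hw_mem t)).1, (himgJ (w t) (hw_mem t)).2⟩
      have hvar := hC Γ 0 (m : ℝ) hcurve himg
      -- lower bound for the variation via the partition 0, 1, …, m
      set u : ℕ → ℝ := fun i => min (i : ℝ) (m : ℝ) with hu_def
      have humono : Monotone u := fun i j hij =>
        min_le_min (by exact_mod_cast hij) le_rfl
      have humem : ∀ i, u i ∈ Set.Icc (0 : ℝ) (m : ℝ) :=
        fun i => ⟨le_min (Nat.cast_nonneg i) h0m.le, min_le_right _ _⟩
      have hsum := eVariationOn.sum_le (f := Γ) (n := m) humono humem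
      have hterm : ∀ i ∈ Finset.range m, edist (Γ (u (i + 1))) (Γ (u i)) = edist y x := by
        intro i hi
        have hi' : i < m := Finset.mem_range.mp hi
        have hui : u i = (i : ℝ) :=
          min_eq_left (by exact_mod_cast hi'.le)
        have hui1 : u (i + 1) = ((i + 1 : ℕ) : ℝ) := by
          refine min_eq_left ?_
          exact_mod_cast Nat.succ_le_of_lt hi'
        rw [hui, hui1]
        rcases Nat.even_or_odd i with hie | hio
        · have h1 : Γ ((i : ℕ) : ℝ) = x := by rw [hΓnat]; exact if_pos hie
          have h2 : Γ (((i + 1 : ℕ)) : ℝ) = y := by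
            rw [hΓnat]; exact if_neg (by simp [Nat.even_add_one, hie])
          rw [h1, h2]
        · have h1 : Γ ((i : ℕ) : ℝ) = y := by
            rw [hΓnat]; exact if_neg (Nat.not_even_iff_odd.mpr hio)
          have h2 : Γ (((i + 1 : ℕ)) : ℝ) = x := by
            rw [hΓnat]; exact if_pos (Nat.even_add_one.mpr (Nat.not_even_iff_odd.mpr hio))
          rw [h1, h2, edist_comm]
      calc (m : ℝ≥0∞) * edist y x
          = ∑ i ∈ Finset.range m, edist (Γ (u (i + 1))) (Γ (u i)) := by
            rw [Finset.sum_congr rfl hterm, Finset.sum_const, Finset.card_range, nsmul_eq_mul]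
        _ ≤ eVariationOn Γ (Set.Icc 0 (m : ℝ)) := hsum
        _ ≤ C := hvar
    have he0 : edist y x ≠ 0 := fun h => hne (edist_eq_zero.mp h).symm
    have het : edist y x ≠ ⊤ := edist_ne_top y x
    have hdivt : (C : ℝ≥0∞) / edist y x ≠ ⊤ :=
      (ENNReal.div_lt_top ENNReal.coe_ne_top he0).ne
    obtain ⟨n, hn⟩ := ENNReal.exists_nat_gt hdivt
    have hle : (n : ℝ≥0∞) ≤ (C : ℝ≥0∞) / edist y x :=
      (ENNReal.le_div_iff_mul_le (Or.inl he0) (Or.inl het)).mpr (key n)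
    exact absurd hle (not_le.mpr hn)
  · -- closedness of J⁺(x) and J⁻(x)
    intro x
    constructor
    · apply IsSeqClosed.isClosed
      intro yn y hyn hlim
      obtain ⟨Ω, hΩo, hyΩ, hCb, ω, hc1, hc2, hc3, hc4, hc5, hIp, hc7⟩ := hL.2.2.1 y
      obtain ⟨z, hzI, -⟩ := (hIp y hyΩ).1
      have hev : ∀ᶠ n in atTop, yn n ∈ L.Jplus x ∩ L.Jminus z := by
        filter_upwards [hlim.eventually ((hIminus_open z).mem_nhds hzI)] with n hn
        exact ⟨hyn n, L.chron_imp_causal hn⟩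
      exact ((hcpt x z).isClosed.mem_of_tendsto hlim hev).1
    · apply IsSeqClosed.isClosed
      intro yn y hyn hlim
      obtain ⟨Ω, hΩo, hyΩ, hCb, ω, hc1, hc2, hc3, hc4, hc5, hIp, hc7⟩ := hL.2.2.1 y
      obtain ⟨z, hzI, -⟩ := (hIp y hyΩ).2
      have hev : ∀ᶠ n in atTop, yn n ∈ L.Jplus z ∩ L.Jminus x := by
        filter_upwards [hlim.eventually ((hIplus_open z).mem_nhds hzI)] with n hn
        exact ⟨L.chron_imp_causal hn, hyn n⟩
      exact ((hcpt z x).isClosed.mem_of_tendsto hlim hev).2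
end

section
/- Every causally simple Lorentzian length space is causally continuous; that is, if (X, d, ≪, ≤, τ) is a Lorentzian length space that is causal and in which J⁺(x) and J⁻(x) are closed for every x ∈ X, then X is distinguishing and reflective. -/
open scoped NNReal ENNReal
open Set Filter Topology

section Aux

variable {X : Type*} [MetricSpace X] (L : LorentzianPreLengthSpace X)

/-- Push-up: `x ≪ y ≤ z` implies `x ≪ z`. -/
lemma aux_pushup_left {a b c : X} (h1 : L.chron a b) (h2 : L.causal b c) : L.chron a c := by
  have hab : L.causal a b := L.chron_imp_causal h1
  have := L.tau_rev_triangle hab h2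
  have hpos : 0 < L.tau a b := L.tau_pos_iff.mpr h1
  exact L.tau_pos_iff.mp (lt_of_lt_of_le (lt_of_lt_of_le hpos le_self_add) this)

/-- Push-up: `x ≤ y ≪ z` implies `x ≪ z`. -/
lemma aux_pushup_right {a b c : X} (h1 : L.causal a b) (h2 : L.chron b c) : L.chron a c := by
  have hbc : L.causal b c := L.chron_imp_causal h2
  have := L.tau_rev_triangle h1 hbc
  have hpos : 0 < L.tau b c := L.tau_pos_iff.mpr h2
  exact L.tau_pos_iff.mp (lt_of_lt_of_le (lt_of_lt_of_le hpos le_add_self) this)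

/-- Chronological density: between chronologically related points there is an
intermediate point. -/
lemma aux_dense (hL : L.IsLengthSpace) {x y : X} (h : L.chron x y) :
    ∃ z : X, L.chron x z ∧ L.chron z y := by
  obtain ⟨γ, a, b, ⟨hab, _, _, hmono⟩, ha, hb⟩ := hL.1.2 x y h
  have hm1 : a < (a + b) / 2 := by linarith
  have hm2 : (a + b) / 2 < b := by linarith
  have hmem : (a + b) / 2 ∈ Icc a b := ⟨hm1.le, hm2.le⟩
  have hamem : a ∈ Icc a b := ⟨le_refl a, hab.le⟩
  have hbmem : b ∈ Icc a b := ⟨hab.le, le_refl b⟩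
  refine ⟨γ ((a + b) / 2), ?_, ?_⟩
  · rw [← ha]; exact hmono hamem hmem hm1
  · rw [← hb]; exact hmono hmem hbmem hm2

/-- Every point is a limit of points in its chronological future. -/
lemma aux_seqplus (hL : L.IsLengthSpace) (x : X) :
    ∃ u : ℕ → X, Tendsto u atTop (𝓝 x) ∧ ∀ n, L.chron x (u n) := by
  obtain ⟨Ω, _, hxΩ, _, ω, _, _, _, _, _, hne, _⟩ := hL.2.2.1 x
  obtain ⟨w, hw, _⟩ := (hne x hxΩ).1
  obtain ⟨γ, a, b, ⟨hab, ⟨K, hK⟩, _, hmono⟩, ha, hb⟩ := hL.1.2 x w hw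
  set t : ℕ → ℝ := fun n => a + (b - a) * (1 / (n + 1)) with ht_def
  have hba : (0:ℝ) < b - a := by linarith
  have htlt : ∀ n, a < t n := by
    intro n
    have : (0:ℝ) < (b - a) * (1 / (n + 1)) := by positivity
    simp only [ht_def]; linarith
  have htle : ∀ n, t n ≤ b := by
    intro n
    have h1 : (1:ℝ) / (n + 1) ≤ 1 := by
      rw [div_le_one (by positivity)]
      have : (0:ℝ) ≤ (n:ℝ) := Nat.cast_nonneg n
      linarith
    have : (b - a) * (1 / (n + 1)) ≤ (b - a) * 1 :=
      mul_le_mul_of_nonneg_left h1 hba.le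
    simp only [ht_def]; linarith
  have htmem : ∀ n, t n ∈ Icc a b := fun n => ⟨(htlt n).le, htle n⟩
  have httend : Tendsto t atTop (𝓝 a) := by
    have h0 : Tendsto (fun n : ℕ => (b - a) * (1 / (n + 1))) atTop (𝓝 ((b - a) * 0)) :=
      tendsto_one_div_add_atTop_nhds_zero_nat.const_mul (b - a)
    have h1 := h0.const_add a
    simpa [ht_def, one_div] using h1
  have hcont : ContinuousOn γ (Icc a b) := hK.continuousOn
  have hwithin : ContinuousWithinAt γ (Icc a b) a := hcont a ⟨le_refl a, hab.le⟩
  have htt : Tendsto t atTop (𝓝[Icc a b] a) :=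
    tendsto_nhdsWithin_of_tendsto_nhds_of_eventually_within t httend
      (Filter.Eventually.of_forall htmem)
  refine ⟨fun n => γ (t n), ?_, ?_⟩
  · have := hwithin.tendsto.comp htt
    rwa [ha] at this
  · intro n
    rw [← ha]
    exact hmono ⟨le_refl a, hab.le⟩ (htmem n) (htlt n)

/-- Every point is a limit of points in its chronological past. -/
lemma aux_seqminus (hL : L.IsLengthSpace) (x : X) :
    ∃ u : ℕ → X, Tendsto u atTop (𝓝 x) ∧ ∀ n, L.chron (u n) x := by
  obtain ⟨Ω, _, hxΩ, _, ω, _, _, _, _, _, hne, _⟩ := hL.2.2.1 x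
  obtain ⟨w, hw, _⟩ := (hne x hxΩ).2
  obtain ⟨γ, a, b, ⟨hab, ⟨K, hK⟩, _, hmono⟩, ha, hb⟩ := hL.1.2 w x hw
  set t : ℕ → ℝ := fun n => b - (b - a) * (1 / (n + 1)) with ht_def
  have hba : (0:ℝ) < b - a := by linarith
  have htlt : ∀ n, t n < b := by
    intro n
    have : (0:ℝ) < (b - a) * (1 / (n + 1)) := by positivity
    simp only [ht_def]; linarith
  have htle : ∀ n, a ≤ t n := by
    intro n
    have h1 : (1:ℝ) / (n + 1) ≤ 1 := by
      rw [div_le_one (by positivity)]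
      have : (0:ℝ) ≤ (n:ℝ) := Nat.cast_nonneg n
      linarith
    have : (b - a) * (1 / (n + 1)) ≤ (b - a) * 1 :=
      mul_le_mul_of_nonneg_left h1 hba.le
    simp only [ht_def]; linarith
  have htmem : ∀ n, t n ∈ Icc a b := fun n => ⟨htle n, (htlt n).le⟩
  have httend : Tendsto t atTop (𝓝 b) := by
    have h0 : Tendsto (fun n : ℕ => (b - a) * (1 / (n + 1))) atTop (𝓝 ((b - a) * 0)) :=
      tendsto_one_div_add_atTop_nhds_zero_nat.const_mul (b - a)
    have h1 := h0.const_sub b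
    simpa [ht_def, one_div] using h1
  have hcont : ContinuousOn γ (Icc a b) := hK.continuousOn
  have hwithin : ContinuousWithinAt γ (Icc a b) b := hcont b ⟨hab.le, le_refl b⟩
  have htt : Tendsto t atTop (𝓝[Icc a b] b) :=
    tendsto_nhdsWithin_of_tendsto_nhds_of_eventually_within t httend
      (Filter.Eventually.of_forall htmem)
  refine ⟨fun n => γ (t n), ?_, ?_⟩
  · have := hwithin.tendsto.comp htt
    rwa [hb] at this
  · intro n
    rw [← hb]
    exact hmono (htmem n) ⟨hab.le, le_refl b⟩ (htlt n)

end Aux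

/-- every causally simple Lorentzian length space is causally continuous. -/
theorem causallySimple_causallyContinuous {X : Type*} [MetricSpace X]
    (L : LorentzianPreLengthSpace X) (hL : L.IsLengthSpace)
    (hcausal : ∀ x y : X, L.causal x y → L.causal y x → x = y)
    (hclosed : ∀ x : X, IsClosed (L.Jplus x) ∧ IsClosed (L.Jminus x)) :
    L.Distinguishing ∧ L.Reflective := by
  constructor
  · constructor
    · -- future distinguishing
      intro x y heq
      obtain ⟨u, hu, hcu⟩ := aux_seqplus L hL x
      obtain ⟨v, hv, hcv⟩ := aux_seqplus L hL y
      have hyx : L.causal y x := by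
        refine (hclosed y).1.mem_of_tendsto hu (Filter.Eventually.of_forall fun n => ?_)
        have : u n ∈ L.Iplus y := heq ▸ (hcu n : u n ∈ L.Iplus x)
        exact L.chron_imp_causal this
      have hxy : L.causal x y := by
        refine (hclosed x).1.mem_of_tendsto hv (Filter.Eventually.of_forall fun n => ?_)
        have : v n ∈ L.Iplus x := heq.symm ▸ (hcv n : v n ∈ L.Iplus y)
        exact L.chron_imp_causal this
      exact hcausal x y hxy hyx
    · -- past distinguishing
      intro x y heq
      obtain ⟨u, hu, hcu⟩ := aux_seqminus L hL x
      obtain ⟨v, hv, hcv⟩ := aux_seqminus L hL y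
      have hxy : L.causal x y := by
        refine (hclosed y).2.mem_of_tendsto hu (Filter.Eventually.of_forall fun n => ?_)
        have : u n ∈ L.Iminus y := heq ▸ (hcu n : u n ∈ L.Iminus x)
        exact L.chron_imp_causal this
      have hyx : L.causal y x := by
        refine (hclosed x).2.mem_of_tendsto hv (Filter.Eventually.of_forall fun n => ?_)
        have : v n ∈ L.Iminus x := heq.symm ▸ (hcv n : v n ∈ L.Iminus y)
        exact L.chron_imp_causal this
      exact hcausal x y hxy hyx
  · constructor
    · -- I⁺(x) ⊆ I⁺(y) → I⁻(y) ⊆ I⁻(x)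
      intro x y hsub z hz
      have hzy : L.chron z y := hz
      obtain ⟨z', hzz', hz'y⟩ := aux_dense L hL hzy
      obtain ⟨u, hu, hcu⟩ := aux_seqplus L hL x
      have hz'x : L.causal z' x := by
        refine (hclosed z').1.mem_of_tendsto hu (Filter.Eventually.of_forall fun n => ?_)
        have h1 : u n ∈ L.Iplus y := hsub (hcu n)
        exact L.chron_imp_causal (L.chron_trans hz'y h1)
      exact aux_pushup_left L hzz' hz'x
    · -- I⁻(y) ⊆ I⁻(x) → I⁺(x) ⊆ I⁺(y)
      intro x y hsub z hz
      have hxz : L.chron x z := hz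
      obtain ⟨z', hxz', hz'z⟩ := aux_dense L hL hxz
      obtain ⟨u, hu, hcu⟩ := aux_seqminus L hL y
      have hyz' : L.causal y z' := by
        refine (hclosed z').2.mem_of_tendsto hu (Filter.Eventually.of_forall fun n => ?_)
        have h1 : u n ∈ L.Iminus x := hsub (hcu n)
        exact L.chron_imp_causal (L.chron_trans h1 hxz')
      exact aux_pushup_right L hyz' hz'z
end

section
/- Every causally continuous Lorentzian length space is stably causal; that is, if (X, d, ≪, ≤, τ) is a Lorentzian length space that is distinguishing and reflective, then the relation K⁺, the smallest closed and transitive relation on X × X containing J⁺ = {(x, y) : x ≤ y}, is antisymmetric. -/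
open scoped NNReal ENNReal
open Set Filter Topology

namespace LorentzianPreLengthSpace

variable {X : Type*} [MetricSpace X] (L : LorentzianPreLengthSpace X)

/-- `I⁺(z)` is open (lower semicontinuity of `τ`). -/
lemma aux_isOpen_Iplus (z : X) : IsOpen (L.Iplus z) := by
  have h : LowerSemicontinuous (fun u : X => L.tau z u) :=
    LowerSemicontinuous.comp (f := fun p : X × X => L.tau p.1 p.2) L.tau_lsc (Continuous.prodMk_right z)
  have ho := lowerSemicontinuous_iff_isOpen_preimage.mp h 0
  have : L.Iplus z = (fun u : X => L.tau z u) ⁻¹' Ioi 0 := by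
    ext u
    simp only [Iplus, Set.mem_setOf_eq, Set.mem_preimage, Set.mem_Ioi]
    exact L.tau_pos_iff.symm
  rw [this]; exact ho

/-- `I⁻(v)` is open (lower semicontinuity of `τ`). -/
lemma aux_isOpen_Iminus (v : X) : IsOpen (L.Iminus v) := by
  have h : LowerSemicontinuous (fun u : X => L.tau u v) :=
    LowerSemicontinuous.comp (f := fun p : X × X => L.tau p.1 p.2) L.tau_lsc (Continuous.prodMk_left v)
  have ho := lowerSemicontinuous_iff_isOpen_preimage.mp h 0
  have : L.Iminus v = (fun u : X => L.tau u v) ⁻¹' Ioi 0 := by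
    ext u
    simp only [Iminus, Set.mem_setOf_eq, Set.mem_preimage, Set.mem_Ioi]
    exact L.tau_pos_iff.symm
  rw [this]; exact ho

/-- Push-up: `z ≪ x ≤ y` implies `z ≪ y`. -/
lemma aux_pushup {z x y : X} (h1 : L.chron z x) (h2 : L.causal x y) : L.chron z y := by
  have hzx : L.causal z x := L.chron_imp_causal h1
  have htri := L.tau_rev_triangle hzx h2
  have hpos : 0 < L.tau z x := L.tau_pos_iff.mpr h1
  have : 0 < L.tau z y :=
    lt_of_lt_of_le hpos (le_trans (le_add_right le_rfl) htri)
  exact L.tau_pos_iff.mp this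

/-- Existence of an intermediate chronological point, from causal path connectedness. -/
lemma aux_intermediate (hL : L.IsLengthSpace) {z x : X} (hz : L.chron z x) :
    ∃ z', L.chron z z' ∧ L.chron z' x := by
  obtain ⟨γ, a, b, ⟨hab, _, _, hcur⟩, hga, hgb⟩ := hL.1.2 z x hz
  have hta : a < (a + b) / 2 := by linarith
  have htb : (a + b) / 2 < b := by linarith
  have htI : (a + b) / 2 ∈ Icc a b := ⟨hta.le, htb.le⟩
  refine ⟨γ ((a + b) / 2), ?_, ?_⟩
  · rw [← hga]; exact hcur (left_mem_Icc.mpr hab.le) htI hta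
  · rw [← hgb]; exact hcur htI (right_mem_Icc.mpr hab.le) htb

end LorentzianPreLengthSpace

/-- every causally continuous Lorentzian length space is stably causal:
the relation `K⁺` is antisymmetric. -/
theorem causallyContinuous_stablyCausal {X : Type*} [MetricSpace X]
    (L : LorentzianPreLengthSpace X) (hL : L.IsLengthSpace)
    (hdist : L.Distinguishing) (hrefl : L.Reflective) :
    ∀ x y : X, (x, y) ∈ L.Kplus → (y, x) ∈ L.Kplus → x = y := by
  -- The relation `R = {(x,y) : I⁻(x) ⊆ I⁻(y)}` is closed, transitive and contains `J⁺`.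
  set R : Set (X × X) := {pq | L.Iminus pq.1 ⊆ L.Iminus pq.2} with hRdef
  have hJ : {pq : X × X | L.causal pq.1 pq.2} ⊆ R := by
    rintro ⟨a, b⟩ hab z hz
    exact L.aux_pushup hz hab
  have htrans : ∀ a b c : X, (a, b) ∈ R → (b, c) ∈ R → (a, c) ∈ R :=
    fun a b c h1 h2 => Set.Subset.trans h1 h2
  have hclosed : IsClosed R := by
    refine isClosed_of_closure_subset ?_
    rintro ⟨x, y⟩ hxy z hz
    -- `hz : z ≪ x`; goal: `z ≪ y`.
    obtain ⟨z', hzz', hz'x⟩ := L.aux_intermediate hL hz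
    -- `y ∈ closure (I⁺ z')`.
    have hyc : y ∈ closure (L.Iplus z') := by
      rw [mem_closure_iff]
      intro U hU hyU
      have hopen : IsOpen ((L.Iplus z') ×ˢ U) := (L.aux_isOpen_Iplus z').prod hU
      have hmem : (x, y) ∈ (L.Iplus z') ×ˢ U := ⟨hz'x, hyU⟩
      obtain ⟨⟨p, q⟩, hpq, hpqR⟩ := mem_closure_iff.mp hxy _ hopen hmem
      exact ⟨q, hpq.2, hpqR hpq.1⟩
    -- Hence `I⁺(y) ⊆ I⁺(z')`.
    have hsub : L.Iplus y ⊆ L.Iplus z' := by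
      intro v hv
      obtain ⟨w, hw1, hw2⟩ := mem_closure_iff.mp hyc _ (L.aux_isOpen_Iminus v) hv
      exact L.chron_trans hw2 hw1
    -- Reflectivity gives `I⁻(z') ⊆ I⁻(y)`, and `z ∈ I⁻(z')`.
    exact hrefl.1 y z' hsub hzz'
  have hRmem : R ∈ {S : Set (X × X) | IsClosed S ∧
      (∀ a b c : X, (a, b) ∈ S → (b, c) ∈ S → (a, c) ∈ S) ∧
      {pq : X × X | L.causal pq.1 pq.2} ⊆ S} := ⟨hclosed, htrans, hJ⟩
  intro x y hxy hyx
  have h1 : L.Iminus x ⊆ L.Iminus y := Set.mem_sInter.mp hxy R hRmem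
  have h2 : L.Iminus y ⊆ L.Iminus x := Set.mem_sInter.mp hyx R hRmem
  exact hdist.2 x y (Set.Subset.antisymm h1 h2)
end

section
/- Let (X, d, ≪, ≤, τ) be a Lorentzian length space such that the metric space (X, d) is locally compact. If X is stably causal (K⁺ is antisymmetric), then X is strongly causal (the Alexandrov topology coincides with the metric topology). -/
open scoped NNReal ENNReal
open Set Filter Topology

section Aux

open LorentzianPreLengthSpace

variable {X : Type*} [MetricSpace X]

private lemma lpls_chron_open (L : LorentzianPreLengthSpace X) :
    IsOpen {pq : X × X | L.chron pq.1 pq.2} := by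
  have h := lowerSemicontinuous_iff_isOpen_preimage.mp L.tau_lsc 0
  have he : {pq : X × X | L.chron pq.1 pq.2}
      = (fun p : X × X => L.tau p.1 p.2) ⁻¹' Ioi 0 := by
    ext pq
    exact ⟨fun h' => L.tau_pos_iff.mpr h', fun h' => L.tau_pos_iff.mp h'⟩
  rw [he]; exact h

private lemma lpls_closure_subset_Kplus (L : LorentzianPreLengthSpace X) :
    closure {pq : X × X | L.causal pq.1 pq.2} ⊆ L.Kplus := by
  intro pq hpq
  refine Set.mem_sInter.mpr fun R hR => ?_
  exact closure_minimal hR.2.2 hR.1 hpq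

/-- Points chronologically in the past/future of `x`, arbitrarily close to `x`. -/
private lemma lpls_exists_chron_near (L : LorentzianPreLengthSpace X)
    (hcpc : L.CausallyPathConnected) (hloc : L.Localizable) (x : X) {d : ℝ} (hd : 0 < d) :
    (∃ p, L.chron p x ∧ dist p x < d) ∧ (∃ q, L.chron x q ∧ dist q x < d) := by
  obtain ⟨Ω, _, hxΩ, _, ω, _, _, _, _, _, hne, _⟩ := hloc x
  constructor
  · obtain ⟨z, hz⟩ := (hne x hxΩ).2
    obtain ⟨γ, a, b, hγ, ha, hb⟩ := hcpc.2 z x hz.1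
    obtain ⟨hab, ⟨K, hK⟩, _, hrel⟩ := hγ
    have hK1 : (0:ℝ) < (K:ℝ) + 1 := by positivity
    set t := max a (b - d / ((K:ℝ) + 1)) with ht
    have htb : t < b := max_lt hab (sub_lt_self b (div_pos hd hK1))
    have htIcc : t ∈ Icc a b := ⟨le_max_left _ _, htb.le⟩
    have hbIcc : b ∈ Icc a b := right_mem_Icc.mpr hab.le
    refine ⟨γ t, hb ▸ hrel htIcc hbIcc htb, ?_⟩
    have hdist := hK.dist_le_mul t htIcc b hbIcc
    have htb2 : dist t b ≤ d / ((K:ℝ) + 1) := by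
      rw [Real.dist_eq, abs_of_nonpos (by linarith)]
      have := le_max_right a (b - d / ((K:ℝ) + 1))
      linarith
    have hlt : (K:ℝ) * (d / ((K:ℝ) + 1)) < d := by
      calc (K:ℝ) * (d / ((K:ℝ) + 1)) < ((K:ℝ) + 1) * (d / ((K:ℝ) + 1)) :=
            mul_lt_mul_of_pos_right (by linarith) (div_pos hd hK1)
        _ = d := by field_simp
    calc dist (γ t) x = dist (γ t) (γ b) := by rw [hb]
      _ ≤ (K:ℝ) * dist t b := hdist
      _ ≤ (K:ℝ) * (d / ((K:ℝ) + 1)) := by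
          exact mul_le_mul_of_nonneg_left htb2 K.coe_nonneg
      _ < d := hlt
  · obtain ⟨z, hz⟩ := (hne x hxΩ).1
    obtain ⟨γ, a, b, hγ, ha, hb⟩ := hcpc.2 x z hz.1
    obtain ⟨hab, ⟨K, hK⟩, _, hrel⟩ := hγ
    have hK1 : (0:ℝ) < (K:ℝ) + 1 := by positivity
    set t := min b (a + d / ((K:ℝ) + 1)) with ht
    have hta : a < t := lt_min hab (lt_add_of_pos_right a (div_pos hd hK1))
    have htIcc : t ∈ Icc a b := ⟨hta.le, min_le_left _ _⟩
    have haIcc : a ∈ Icc a b := left_mem_Icc.mpr hab.le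
    refine ⟨γ t, ha ▸ hrel haIcc htIcc hta, ?_⟩
    have hdist := hK.dist_le_mul t htIcc a haIcc
    have htb2 : dist t a ≤ d / ((K:ℝ) + 1) := by
      rw [Real.dist_eq, abs_of_nonneg (by linarith)]
      have := min_le_right b (a + d / ((K:ℝ) + 1))
      linarith
    have hlt : (K:ℝ) * (d / ((K:ℝ) + 1)) < d := by
      calc (K:ℝ) * (d / ((K:ℝ) + 1)) < ((K:ℝ) + 1) * (d / ((K:ℝ) + 1)) :=
            mul_lt_mul_of_pos_right (by linarith) (div_pos hd hK1)
        _ = d := by field_simp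
    calc dist (γ t) x = dist (γ t) (γ a) := by rw [ha]
      _ ≤ (K:ℝ) * dist t a := hdist
      _ ≤ (K:ℝ) * (d / ((K:ℝ) + 1)) := mul_le_mul_of_nonneg_left htb2 K.coe_nonneg
      _ < d := hlt

/-- The key claim: around every point there are arbitrarily small chronological diamonds. -/
private lemma lpls_key [LocallyCompactSpace X] (L : LorentzianPreLengthSpace X)
    (hL : L.IsLengthSpace) (hsc : L.StablyCausal) (x : X) {U : Set X}
    (hU : IsOpen U) (hxU : x ∈ U) :
    ∃ p q, L.chron p x ∧ L.chron x q ∧ L.Iplus p ∩ L.Iminus q ⊆ U := by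
  obtain ⟨hcpc, _, hloc, _⟩ := hL
  obtain ⟨ε, hε, hball⟩ := Metric.isOpen_iff.mp hU x hxU
  obtain ⟨r, hr, hrc⟩ := Metric.exists_isCompact_closedBall x
  set ρ := min ε r with hρdef
  have hρ : 0 < ρ := lt_min hε hr
  have hcomp : IsCompact (Metric.closedBall x ρ) :=
    hrc.of_isClosed_subset Metric.isClosed_closedBall
      (Metric.closedBall_subset_closedBall (min_le_right _ _))
  by_contra hcon
  push_neg at hcon
  -- for every small diamond there is a witness outside `ball x ρ`
  have hwit : ∀ p q, L.chron p x → L.chron x q →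
      ∃ w, L.chron p w ∧ L.chron w q ∧ ρ ≤ dist w x := by
    intro p q hp hq
    have hns : ¬ (L.Iplus p ∩ L.Iminus q ⊆ U) := hcon p q hp hq
    have hns2 : ¬ (L.Iplus p ∩ L.Iminus q ⊆ Metric.ball x ρ) := by
      intro hsub
      exact hns (hsub.trans ((Metric.ball_subset_ball (min_le_left _ _)).trans hball))
    obtain ⟨w, hw, hwb⟩ := Set.not_subset.mp hns2
    exact ⟨w, hw.1, hw.2, not_lt.mp fun h => hwb (Metric.mem_ball.mpr h)⟩
  -- sequences converging to x
  have hseq : ∀ n : ℕ, ∃ p q : X, (L.chron p x ∧ dist p x < min ρ (1 / (n + 1))) ∧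
      (L.chron x q ∧ dist q x < min ρ (1 / (n + 1))) := by
    intro n
    have hpos : (0:ℝ) < min ρ (1 / (n + 1)) := lt_min hρ (by positivity)
    obtain ⟨h1, h2⟩ := lpls_exists_chron_near L hcpc hloc x hpos
    obtain ⟨p, hp⟩ := h1; obtain ⟨q, hq⟩ := h2
    exact ⟨p, q, hp, hq⟩
  choose p q hp hq using hseq
  -- points on the sphere of radius ρ causally between p n and q n
  have hy : ∀ n : ℕ, ∃ y : X, L.causal (p n) y ∧ L.causal y (q n) ∧ dist y x = ρ := by
    intro n
    obtain ⟨w, hw1, hw2, hw3⟩ := hwit (p n) (q n) (hp n).1 (hq n).1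
    obtain ⟨γ, a, b, hγ, ha, hb⟩ := hcpc.2 (p n) w hw1
    obtain ⟨hab, ⟨K, hK⟩, _, hrel⟩ := hγ
    have hcont : ContinuousOn (fun t => dist (γ t) x) (Icc a b) :=
      (continuous_id.dist continuous_const).comp_continuousOn hK.continuousOn
    have hfa : dist (γ a) x < ρ := by
      rw [ha]; exact lt_of_lt_of_le (hp n).2 (min_le_left _ _)
    have hfb : ρ ≤ dist (γ b) x := by rw [hb]; exact hw3
    have hmem : ρ ∈ Icc (dist (γ a) x) (dist (γ b) x) := ⟨hfa.le, hfb⟩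
    obtain ⟨t, htIcc, htρ⟩ := intermediate_value_Icc hab.le hcont hmem
    have hta : a < t := by
      rcases lt_or_eq_of_le htIcc.1 with h | h
      · exact h
      · exfalso; rw [← h] at htρ; exact absurd htρ (ne_of_lt hfa)
    refine ⟨γ t, ?_, ?_, htρ⟩
    · rw [← ha]
      exact L.chron_imp_causal (hrel (left_mem_Icc.mpr hab.le) htIcc hta)
    · rcases lt_or_eq_of_le htIcc.2 with h | h
      · have h1 : L.chron (γ t) (γ b) := hrel htIcc (right_mem_Icc.mpr hab.le) h
        rw [hb] at h1
        exact L.causal_trans (L.chron_imp_causal h1) (L.chron_imp_causal hw2)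
      · rw [h, hb]; exact L.chron_imp_causal hw2
  choose y hy1 hy2 hy3 using hy
  -- extract a convergent subsequence
  obtain ⟨z, hzmem, φ, hφ, hconv⟩ :=
    hcomp.tendsto_subseq (fun n => Metric.mem_closedBall.mpr (hy3 n).le)
  have hzx : dist z x = ρ := by
    have h1 : Tendsto (fun k => dist (y (φ k)) x) atTop (𝓝 (dist z x)) :=
      hconv.dist tendsto_const_nhds
    have h2 : (fun k => dist (y (φ k)) x) = fun _ => ρ := funext fun k => hy3 (φ k)
    rw [h2] at h1
    exact (tendsto_nhds_unique h1 tendsto_const_nhds)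
  have hzne : z ≠ x := by
    intro h; rw [h, dist_self] at hzx; exact absurd hzx.symm (ne_of_gt hρ)
  -- limits of the sequences
  have hone : Tendsto (fun n : ℕ => (1:ℝ) / (n + 1)) atTop (𝓝 0) :=
    tendsto_one_div_add_atTop_nhds_zero_nat
  have hpx : Tendsto p atTop (𝓝 x) := by
    rw [tendsto_iff_dist_tendsto_zero]
    exact squeeze_zero (fun n => dist_nonneg)
      (fun n => ((hp n).2.le.trans (min_le_right _ _))) hone
  have hqx : Tendsto q atTop (𝓝 x) := by
    rw [tendsto_iff_dist_tendsto_zero]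
    exact squeeze_zero (fun n => dist_nonneg)
      (fun n => ((hq n).2.le.trans (min_le_right _ _))) hone
  have hpφ : Tendsto (fun k => p (φ k)) atTop (𝓝 x) := hpx.comp hφ.tendsto_atTop
  have hqφ : Tendsto (fun k => q (φ k)) atTop (𝓝 x) := hqx.comp hφ.tendsto_atTop
  have hxz : (x, z) ∈ L.Kplus := by
    apply lpls_closure_subset_Kplus L
    apply mem_closure_of_tendsto (hpφ.prodMk_nhds hconv)
    exact Eventually.of_forall fun k => hy1 (φ k)
  have hzx' : (z, x) ∈ L.Kplus := by
    apply lpls_closure_subset_Kplus L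
    apply mem_closure_of_tendsto (hconv.prodMk_nhds hqφ)
    exact Eventually.of_forall fun k => hy2 (φ k)
  exact hzne (hsc z x hzx' hxz)

end Aux

/-- a stably causal Lorentzian length space over a locally compact metric
space is strongly causal. -/
theorem stablyCausal_stronglyCausal {X : Type*} [MetricSpace X] [LocallyCompactSpace X]
    (L : LorentzianPreLengthSpace X) (hL : L.IsLengthSpace)
    (hsc : L.StablyCausal) : L.StronglyCausal := by
  show L.AlexandrovTopology = _
  unfold LorentzianPreLengthSpace.AlexandrovTopology
  refine le_antisymm ?_ (le_generateFrom ?_)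
  · rw [TopologicalSpace.le_def]
    intro U hU
    have key := fun (z : X) (hz : z ∈ U) => lpls_key L hL hsc z hU hz
    choose pf qf hp hq hsub using key
    have hUeq : U = ⋃₀ (Set.range fun zh : {z // z ∈ U} =>
        L.Iplus (pf zh.1 zh.2) ∩ L.Iminus (qf zh.1 zh.2)) := by
      ext w
      constructor
      · intro hw
        exact ⟨_, ⟨⟨w, hw⟩, rfl⟩, hp w hw, hq w hw⟩
      · rintro ⟨s, ⟨⟨z, hz⟩, rfl⟩, hws⟩
        exact hsub z hz hws
    rw [hUeq]
    refine TopologicalSpace.GenerateOpen.sUnion _ ?_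
    rintro s ⟨⟨z, hz⟩, rfl⟩
    exact TopologicalSpace.GenerateOpen.basic _ ⟨_, _, rfl⟩
  · rintro s ⟨u, v, rfl⟩
    have h1 : IsOpen (L.Iplus u) :=
      (lpls_chron_open L).preimage (continuous_const.prodMk continuous_id)
    have h2 : IsOpen (L.Iminus v) :=
      (lpls_chron_open L).preimage (continuous_id.prodMk continuous_const)
    exact h1.inter h2
end

section
/- Let (X, d, ≪, ≤, τ) be a distinguishing Lorentzian length space. If the time separation τ : X × X → [0, ∞] is continuous (with respect to the product of the metric topologies), then X is causally continuous, i.e. distinguishing and reflective. -/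
open scoped NNReal ENNReal
open Set Filter Topology

private lemma approx_chron_above {X : Type*} [MetricSpace X] (L : LorentzianPreLengthSpace X)
    (hpc : ∀ x y : X, L.chron x y →
      ∃ γ : ℝ → X, ∃ a b : ℝ, L.IsFutureTimelikeCurve γ a b ∧ γ a = x ∧ γ b = y)
    {x w : X} (hxw : L.chron x w) :
    ∃ p : ℕ → X, Tendsto p atTop (𝓝 x) ∧ ∀ n, L.chron x (p n) := by
  obtain ⟨γ, a, b, ⟨hab, ⟨K, hK⟩, -, hmono⟩, ha, hb⟩ := hpc x w hxw
  have hpos : ∀ n : ℕ, 0 < (b - a) / ((n : ℝ) + 1) := fun n =>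
    div_pos (by linarith) (by positivity)
  have hle : ∀ n : ℕ, (b - a) / ((n : ℝ) + 1) ≤ b - a := fun n =>
    div_le_self (by linarith) (le_add_of_nonneg_left (Nat.cast_nonneg n))
  set t : ℕ → ℝ := fun n => a + (b - a) / ((n : ℝ) + 1) with htdef
  have hmem : ∀ n, t n ∈ Icc a b := fun n =>
    ⟨by have := hpos n; simp only [htdef]; linarith,
     by have := hle n; simp only [htdef]; linarith⟩
  have h0 : Tendsto (fun n : ℕ => (b - a) / ((n : ℝ) + 1)) atTop (𝓝 0) := by
    have := tendsto_one_div_add_atTop_nhds_zero_nat.const_mul (b - a)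
    simpa [mul_one_div, div_eq_mul_inv] using this
  have ht : Tendsto t atTop (𝓝 a) := by
    have := (tendsto_const_nhds : Tendsto (fun _ : ℕ => a) atTop (𝓝 a)).add h0
    simpa using this
  have htW : Tendsto t atTop (𝓝[Icc a b] a) :=
    tendsto_nhdsWithin_of_tendsto_nhds_of_eventually_within _ ht (Eventually.of_forall hmem)
  have hγ : Tendsto (fun n => γ (t n)) atTop (𝓝 (γ a)) :=
    Filter.Tendsto.comp (hK.continuousOn a ⟨le_refl a, hab.le⟩) htW
  refine ⟨fun n => γ (t n), ha ▸ hγ, fun n => ?_⟩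
  have := hmono ⟨le_refl a, hab.le⟩ (hmem n) (lt_add_of_pos_right a (hpos n))
  rwa [ha] at this

private lemma approx_chron_below {X : Type*} [MetricSpace X] (L : LorentzianPreLengthSpace X)
    (hpc : ∀ x y : X, L.chron x y →
      ∃ γ : ℝ → X, ∃ a b : ℝ, L.IsFutureTimelikeCurve γ a b ∧ γ a = x ∧ γ b = y)
    {w y : X} (hwy : L.chron w y) :
    ∃ p : ℕ → X, Tendsto p atTop (𝓝 y) ∧ ∀ n, L.chron (p n) y := by
  obtain ⟨γ, a, b, ⟨hab, ⟨K, hK⟩, -, hmono⟩, ha, hb⟩ := hpc w y hwy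
  have hpos : ∀ n : ℕ, 0 < (b - a) / ((n : ℝ) + 1) := fun n =>
    div_pos (by linarith) (by positivity)
  have hle : ∀ n : ℕ, (b - a) / ((n : ℝ) + 1) ≤ b - a := fun n =>
    div_le_self (by linarith) (le_add_of_nonneg_left (Nat.cast_nonneg n))
  set t : ℕ → ℝ := fun n => b - (b - a) / ((n : ℝ) + 1) with htdef
  have hmem : ∀ n, t n ∈ Icc a b := fun n =>
    ⟨by have := hle n; simp only [htdef]; linarith,
     by have := hpos n; simp only [htdef]; linarith⟩
  have h0 : Tendsto (fun n : ℕ => (b - a) / ((n : ℝ) + 1)) atTop (𝓝 0) := by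
    have := tendsto_one_div_add_atTop_nhds_zero_nat.const_mul (b - a)
    simpa [mul_one_div, div_eq_mul_inv] using this
  have ht : Tendsto t atTop (𝓝 b) := by
    have := (tendsto_const_nhds : Tendsto (fun _ : ℕ => b) atTop (𝓝 b)).sub h0
    simpa using this
  have htW : Tendsto t atTop (𝓝[Icc a b] b) :=
    tendsto_nhdsWithin_of_tendsto_nhds_of_eventually_within _ ht (Eventually.of_forall hmem)
  have hγ : Tendsto (fun n => γ (t n)) atTop (𝓝 (γ b)) :=
    Filter.Tendsto.comp (hK.continuousOn b ⟨hab.le, le_refl b⟩) htW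
  refine ⟨fun n => γ (t n), hb ▸ hγ, fun n => ?_⟩
  have htlt : t n < b := by have := hpos n; simp only [htdef]; linarith
  have := hmono (hmem n) ⟨hab.le, le_refl b⟩ htlt
  rwa [hb] at this

/-- a distinguishing Lorentzian length space with continuous time separation
is causally continuous. -/
theorem continuous_tau_causallyContinuous {X : Type*} [MetricSpace X]
    (L : LorentzianPreLengthSpace X) (hL : L.IsLengthSpace)
    (hdist : L.Distinguishing)
    (hcont : Continuous fun p : X × X => L.tau p.1 p.2) :
    L.Distinguishing ∧ L.Reflective := by
  have hpc := hL.1.2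
  refine ⟨hdist, ?_, ?_⟩
  · -- I⁺(x) ⊆ I⁺(y) → I⁻(y) ⊆ I⁻(x)
    intro x y hsub z hz
    have hzy : L.chron z y := hz
    obtain ⟨Ω, hΩo, hxΩ, hbd, ω, hc1, hc2, hc3, hc4, hc5, hne, hmax⟩ := hL.2.2.1 x
    obtain ⟨w, hw1, hw2⟩ := (hne x hxΩ).1
    obtain ⟨p, hp, hchron⟩ := approx_chron_above L hpc hw1
    have hcz : Continuous (fun u : X => L.tau z u) :=
      hcont.comp (continuous_const.prodMk continuous_id)
    have htend : Tendsto (fun n => L.tau z (p n)) atTop (𝓝 (L.tau z x)) :=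
      hcz.continuousAt.tendsto.comp hp
    have hlow : ∀ n, L.tau z y ≤ L.tau z (p n) := by
      intro n
      have hyp : L.chron y (p n) := hsub (hchron n)
      have := L.tau_rev_triangle (L.chron_imp_causal hzy) (L.chron_imp_causal hyp)
      exact le_trans le_self_add this
    have hfin : L.tau z y ≤ L.tau z x := ge_of_tendsto' htend hlow
    have : 0 < L.tau z x := lt_of_lt_of_le (L.tau_pos_iff.mpr hzy) hfin
    exact L.tau_pos_iff.mp this
  · -- I⁻(y) ⊆ I⁻(x) → I⁺(x) ⊆ I⁺(y)
    intro x y hsub z hz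
    have hxz : L.chron x z := hz
    obtain ⟨Ω, hΩo, hyΩ, hbd, ω, hc1, hc2, hc3, hc4, hc5, hne, hmax⟩ := hL.2.2.1 y
    obtain ⟨w, hw1, hw2⟩ := (hne y hyΩ).2
    obtain ⟨p, hp, hchron⟩ := approx_chron_below L hpc hw1
    have hcz : Continuous (fun u : X => L.tau u z) :=
      hcont.comp (continuous_id.prodMk continuous_const)
    have htend : Tendsto (fun n => L.tau (p n) z) atTop (𝓝 (L.tau y z)) :=
      hcz.continuousAt.tendsto.comp hp
    have hlow : ∀ n, L.tau x z ≤ L.tau (p n) z := by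
      intro n
      have hpx : L.chron (p n) x := hsub (hchron n)
      have := L.tau_rev_triangle (L.chron_imp_causal hpx) (L.chron_imp_causal hxz)
      exact le_trans le_add_self this
    have hfin : L.tau x z ≤ L.tau y z := ge_of_tendsto' htend hlow
    have : 0 < L.tau y z := lt_of_lt_of_le (L.tau_pos_iff.mpr hxz) hfin
    exact L.tau_pos_iff.mp this
end

section
/- Let (X, d, ≪, ≤, τ) be a strongly causal Lorentzian length space. Then for each x ∈ X there exists an open neighborhood V of x such that the restriction of τ to V × V is continuous. -/
open scoped NNReal ENNReal
open Set Filter Topology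

namespace LorentzianPreLengthSpace

variable {X : Type*} [MetricSpace X] (L : LorentzianPreLengthSpace X)

/-- Push-up: `x ≪ y ≤ z` implies `x ≪ z`. -/
lemma push_up {x y z : X} (h1 : L.chron x y) (h2 : L.causal y z) : L.chron x z := by
  rw [← L.tau_pos_iff]
  calc (0 : ℝ≥0∞) < L.tau x y := L.tau_pos_iff.mpr h1
    _ ≤ L.tau x y + L.tau y z := le_self_add
    _ ≤ L.tau x z := L.tau_rev_triangle (L.chron_imp_causal h1) h2

/-- Push-down: `x ≤ y ≪ z` implies `x ≪ z`. -/
lemma push_down {x y z : X} (h1 : L.causal x y) (h2 : L.chron y z) : L.chron x z := by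
  rw [← L.tau_pos_iff]
  calc (0 : ℝ≥0∞) < L.tau y z := L.tau_pos_iff.mpr h2
    _ ≤ L.tau x y + L.tau y z := le_add_self
    _ ≤ L.tau x z := L.tau_rev_triangle h1 (L.chron_imp_causal h2)

/-- In a strongly causal, causally path connected space there are no chronological loops. -/
lemma not_chron_self_of_stronglyCausal (hcpc : L.CausallyPathConnected)
    (hsc : L.StronglyCausal) (p : X) : ¬ L.chron p p := by
  intro h
  obtain ⟨γ, a, b, ⟨hab, _, ⟨s, hs, t, ht, hne⟩, hch⟩, hγa, hγb⟩ := hcpc.2 p p h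
  obtain ⟨t₀, ht₀, hz⟩ : ∃ t₀ ∈ Icc a b, γ t₀ ≠ p := by
    by_cases h1 : γ s = p
    · exact ⟨t, ht, fun h2 => hne (by rw [h1, h2])⟩
    · exact ⟨s, hs, h1⟩
  set z := γ t₀ with hzdef
  have hta : a < t₀ := lt_of_le_of_ne ht₀.1 (fun h' => hz (by rw [hzdef, ← h', hγa]))
  have htb : t₀ < b := lt_of_le_of_ne ht₀.2 (fun h' => hz (by rw [hzdef, h', hγb]))
  have hpz : L.chron p z := by
    rw [← hγa]; exact hch ⟨le_refl a, hab.le⟩ ht₀ hta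
  have hzp : L.chron z p := by
    rw [← hγb]; exact hch ht₀ ⟨hab.le, le_refl b⟩ htb
  have hgen : (inferInstance : TopologicalSpace X) =
      TopologicalSpace.generateFrom {s : Set X | ∃ x y : X, s = L.Iplus x ∩ L.Iminus y} :=
    hsc.symm
  have hbasis := TopologicalSpace.isTopologicalBasis_of_subbasis hgen
  obtain ⟨v, ⟨F, ⟨hFfin, hFS⟩, rfl⟩, hpv, hvU⟩ :=
    hbasis.exists_subset_of_mem_open (show p ∈ ({z}ᶜ : Set X) from Ne.symm hz)
      isOpen_compl_singleton
  have hzv : z ∈ ⋂₀ F := by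
    intro u hu
    obtain ⟨a', b', rfl⟩ := hFS hu
    have hp' := hpv _ hu
    exact ⟨L.chron_trans hp'.1 hpz, L.chron_trans hzp hp'.2⟩
  exact hvU hzv rfl

end LorentzianPreLengthSpace

/-- in a strongly causal Lorentzian length space, every point has an open
neighborhood `V` on which `τ|_{V × V}` is continuous. -/
theorem stronglyCausal_tau_locally_continuous {X : Type*} [MetricSpace X]
    (L : LorentzianPreLengthSpace X) (hL : L.IsLengthSpace)
    (hsc : L.StronglyCausal) (x : X) :
    ∃ V : Set X, IsOpen V ∧ x ∈ V ∧
      ContinuousOn (fun p : X × X => L.tau p.1 p.2) (V ×ˢ V) := by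
  obtain ⟨Ω, hΩopen, hxΩ, -, ω, hωcont, -, -, hωzero, hωpos, -, hmax⟩ := hL.2.2.1 x
  have hgen : (inferInstance : TopologicalSpace X) =
      TopologicalSpace.generateFrom {s : Set X | ∃ a b : X, s = L.Iplus a ∩ L.Iminus b} :=
    hsc.symm
  have hbasis := TopologicalSpace.isTopologicalBasis_of_subbasis hgen
  obtain ⟨v, hvB, hxv, hvΩ⟩ := hbasis.exists_subset_of_mem_open hxΩ hΩopen
  obtain ⟨F, ⟨hFfin, hFS⟩, rfl⟩ := hvB
  refine ⟨⋂₀ F, hbasis.isOpen ⟨F, ⟨hFfin, hFS⟩, rfl⟩, hxv, ?_⟩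
  -- causal convexity of V := ⋂₀ F
  have hcc : ∀ p q z : X, p ∈ ⋂₀ F → q ∈ ⋂₀ F → L.causal p z → L.causal z q →
      z ∈ ⋂₀ F := by
    intro p q z hp hq hpz hzq u hu
    obtain ⟨a', b', rfl⟩ := hFS hu
    exact ⟨L.push_up (hp _ hu).1 hpz, L.push_down hzq (hq _ hu).2⟩
  -- τ = ω on V × V
  have heq : ∀ p ∈ ⋂₀ F, ∀ q ∈ ⋂₀ F, L.tau p q = ω p q := by
    intro p hp q hq
    have hpΩ : p ∈ Ω := hvΩ hp
    have hqΩ : q ∈ Ω := hvΩ hq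
    by_cases hpq : L.causal p q
    · by_cases hne : p = q
      · subst hne
        have hnc : ¬ L.chron p p := L.not_chron_self_of_stronglyCausal hL.1 hsc p
        have h1 : L.tau p p = 0 := by
          by_contra h
          exact hnc (L.tau_pos_iff.mp (pos_iff_ne_zero.mpr h))
        have h2 : ω p p = 0 := by
          by_contra h
          exact hnc ((hωpos p hpΩ p hpΩ).mp (pos_iff_ne_zero.mpr h))
        rw [h1, h2]
      · obtain ⟨γ, a, b, hγ, hγa, hγb, hγΩ, hγlen, hγmax⟩ := hmax p hpΩ q hqΩ hpq hne
        rw [hL.2.2.2 p q]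
        apply le_antisymm
        · apply sSup_le
          rintro ℓ ⟨σ, c, e, hσ, hσc, hσe, rfl⟩
          have himV : σ '' Icc c e ⊆ ⋂₀ F := by
            rintro z ⟨t, ht, rfl⟩
            by_cases hc : t = c
            · rw [hc, hσc]; exact hp
            by_cases he : t = e
            · rw [he, hσe]; exact hq
            have htc : c < t := lt_of_le_of_ne ht.1 (Ne.symm hc)
            have hte : t < e := lt_of_le_of_ne ht.2 he
            have h1 : L.causal p (σ t) := by
              rw [← hσc]; exact hσ.2.2.2 ⟨le_refl c, hσ.1.le⟩ ht htc
            have h2 : L.causal (σ t) q := by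
              rw [← hσe]; exact hσ.2.2.2 ht ⟨hσ.1.le, le_refl e⟩ hte
            exact hcc p q (σ t) hp hq h1 h2
          have := hγmax σ c e hσ hσc hσe (himV.trans hvΩ)
          rw [hγlen] at this
          exact this
        · rw [← hγlen]
          exact le_sSup ⟨γ, a, b, hγ, hγa, hγb, rfl⟩
    · rw [L.tau_eq_zero hpq, hωzero p hpΩ q hqΩ hpq]
  have hmono : (⋂₀ F) ×ˢ (⋂₀ F) ⊆ Ω ×ˢ Ω := Set.prod_mono hvΩ hvΩ
  exact (hωcont.mono hmono).congr fun pq hpq => heq pq.1 hpq.1 pq.2 hpq.2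
end

section
/- Let (X, d, ≪, ≤, τ) be a strongly causal Lorentzian length space, let (Y, d̃, ≪̃, ≤̃, τ̃) be an arbitrary Lorentzian length space, and let f : X → Y be a surjective distance homothetic map (not necessarily continuous). Then f is an open map (images of d-open sets are d̃-open) and f is injective. -/
open scoped NNReal ENNReal
open Set Filter Topology

section Aux

open TopologicalSpace

lemma lpls_isOpen_Iplus {X : Type*} [MetricSpace X] (L : LorentzianPreLengthSpace X) (x : X) :
    IsOpen (L.Iplus x) := by
  have h : LowerSemicontinuous fun y : X => L.tau x y :=
    LowerSemicontinuous.comp (g := fun y : X => (x, y)) L.tau_lsc (Continuous.prodMk_right x)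
  have := h.isOpen_preimage 0
  convert this using 1
  ext y
  simp [LorentzianPreLengthSpace.Iplus, ← L.tau_pos_iff, Set.mem_preimage, Set.mem_Ioi]

lemma lpls_isOpen_Iminus {X : Type*} [MetricSpace X] (L : LorentzianPreLengthSpace X) (x : X) :
    IsOpen (L.Iminus x) := by
  have h : LowerSemicontinuous fun y : X => L.tau y x :=
    LowerSemicontinuous.comp L.tau_lsc (continuous_id.prodMk continuous_const)
  have := h.isOpen_preimage 0
  convert this using 1
  ext y
  simp [LorentzianPreLengthSpace.Iminus, ← L.tau_pos_iff, Set.mem_preimage, Set.mem_Ioi]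

end Aux

/-- a surjective distance homothetic map from a strongly causal Lorentzian
length space to a Lorentzian length space is open and injective. -/
theorem distanceHomothetic_open_injective {X Y : Type*} [MetricSpace X] [MetricSpace Y]
    (LX : LorentzianPreLengthSpace X) (LY : LorentzianPreLengthSpace Y)
    (hX : LX.IsLengthSpace) (hY : LY.IsLengthSpace) (hXsc : LX.StronglyCausal)
    (f : X → Y) (hsurj : Function.Surjective f) (hhom : DistanceHomothetic LX LY f) :
    IsOpenMap f ∧ Function.Injective f := by
  obtain ⟨c, hc, hf⟩ := hhom
  have hc0 : (c : ℝ≥0∞) ≠ 0 := by exact_mod_cast hc.ne'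
  have hct : (c : ℝ≥0∞) ≠ ⊤ := ENNReal.coe_ne_top
  -- chron transfer
  have hchron : ∀ p q : X, LY.chron (f p) (f q) ↔ LX.chron p q := by
    intro p q
    rw [← LY.tau_pos_iff, ← LX.tau_pos_iff, hf]
    simp [pos_iff_ne_zero, hc0]
  -- injectivity
  have hinj : Function.Injective f := by
    intro p q hpq
    by_contra hne
    have htau1 : ∀ z : X, LX.chron p z ↔ LX.chron q z := by
      intro z
      rw [← LX.tau_pos_iff, ← LX.tau_pos_iff]
      have : (c : ℝ≥0∞) * LX.tau p z = (c : ℝ≥0∞) * LX.tau q z := by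
        rw [← hf, ← hf, hpq]
      have := (ENNReal.mul_right_inj hc0 hct).1 this
      rw [this]
    have htau2 : ∀ z : X, LX.chron z p ↔ LX.chron z q := by
      intro z
      rw [← LX.tau_pos_iff, ← LX.tau_pos_iff]
      have : (c : ℝ≥0∞) * LX.tau z p = (c : ℝ≥0∞) * LX.tau z q := by
        rw [← hf, ← hf, hpq]
      have := (ENNReal.mul_right_inj hc0 hct).1 this
      rw [this]
    -- every Alexandrov open set containing p contains q
    have key : ∀ s : Set X, TopologicalSpace.GenerateOpen
        {s : Set X | ∃ x y : X, s = LX.Iplus x ∩ LX.Iminus y} s → (p ∈ s ↔ q ∈ s) := by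
      intro s hs
      induction hs with
      | basic s hs =>
        obtain ⟨x, y, rfl⟩ := hs
        simp only [Set.mem_inter_iff, LorentzianPreLengthSpace.Iplus,
          LorentzianPreLengthSpace.Iminus, Set.mem_setOf_eq]
        rw [htau2 x, htau1 y]
      | univ => simp
      | inter s t _ _ ihs iht => simp [Set.mem_inter_iff, ihs, iht]
      | sUnion S _ ih =>
        simp only [Set.mem_sUnion]
        exact ⟨fun ⟨t, ht, hpt⟩ => ⟨t, ht, (ih t ht).1 hpt⟩,
               fun ⟨t, ht, hqt⟩ => ⟨t, ht, (ih t ht).2 hqt⟩⟩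
    have hopen : IsOpen ({q}ᶜ : Set X) := isOpen_compl_singleton
    have : IsOpen[LX.AlexandrovTopology] ({q}ᶜ : Set X) := by
      rw [hXsc]; exact hopen
    have hgen : TopologicalSpace.GenerateOpen
        {s : Set X | ∃ x y : X, s = LX.Iplus x ∩ LX.Iminus y} ({q}ᶜ : Set X) := this
    have hq : q ∈ ({q}ᶜ : Set X) := (key _ hgen).1 (by simpa using hne)
    simp at hq
  refine ⟨?_, hinj⟩
  -- openness
  intro U hU
  have hUalex : TopologicalSpace.GenerateOpen
      {s : Set X | ∃ x y : X, s = LX.Iplus x ∩ LX.Iminus y} U := by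
    have : IsOpen[LX.AlexandrovTopology] U := by rw [hXsc]; exact hU
    exact this
  clear hU
  induction hUalex with
  | basic s hs =>
    obtain ⟨x, y, rfl⟩ := hs
    have himg : f '' (LX.Iplus x ∩ LX.Iminus y) = LY.Iplus (f x) ∩ LY.Iminus (f y) := by
      ext z
      constructor
      · rintro ⟨w, ⟨hw1, hw2⟩, rfl⟩
        exact ⟨(hchron x w).2 hw1, (hchron w y).2 hw2⟩
      · rintro ⟨hz1, hz2⟩
        obtain ⟨w, rfl⟩ := hsurj z
        exact ⟨w, ⟨(hchron x w).1 hz1, (hchron w y).1 hz2⟩, rfl⟩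
    rw [himg]
    exact (lpls_isOpen_Iplus LY (f x)).inter (lpls_isOpen_Iminus LY (f y))
  | univ =>
    rw [Set.image_univ, Set.range_eq_univ.2 hsurj]
    exact isOpen_univ
  | inter s t _ _ ihs iht =>
    rw [Set.image_inter hinj]
    exact ihs.inter iht
  | sUnion S _ ih =>
    rw [Set.image_sUnion, Set.sUnion_image]
    exact isOpen_biUnion ih
end
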